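/- arXiv:2112.04118 — 6 statements merged into one kernel-verified Lean document; each statement's English description precedes it below -/
import Mathlib

section
/- Let C be an (n,k) convolutional code over a finite field F with degree δ. Then the free distance d = min{ wt(v(D)) : v(D) ∈ C, v(D) ≠ 0 } satisfies d ≤ (n-k)(⌊δ/k⌋ + 1) + δ + 1. -/
open Polynomial Matrix

/-- The weight of a polynomial vector `v(D) ∈ F[D]^n`: the total number of nonzero
coefficients, i.e. `wt(v(D)) = Σ_j wt(v_j)` where `v(D) = Σ_j v_j D^j`. -/
noncomputable def polyWt {F : Type*} [Field F] {n : ℕ} (v : Fin n → Polynomial F) : ℕ :=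
  ∑ a, (v a).support.card

/-- The maximal degree of the `k × k` minors of a `k × n` polynomial matrix. -/
noncomputable def maxMinorDeg {F : Type*} [Field F] {k n : ℕ}
    (G : Matrix (Fin k) (Fin n) (Polynomial F)) : ℕ :=
  Finset.univ.sup fun e : Fin k ↪ Fin n => ((G.submatrix id ⇑e).det).natDegree

namespace SingAux

variable {F : Type*} [Field F] {n k : ℕ}

noncomputable def rdeg {n : ℕ} (w : Fin n → Polynomial F) : ℕ :=
  Finset.univ.sup fun j => (w j).natDegree

lemma natDegree_le_rdeg (w : Fin n → Polynomial F) (j : Fin n) :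
    (w j).natDegree ≤ rdeg w := by
  simpa [rdeg] using Finset.le_sup (f := fun j => (w j).natDegree) (Finset.mem_univ j)

lemma sum_rdeg_le_of_minor (W : Matrix (Fin k) (Fin n) (Polynomial F))
    (e : Fin k ↪ Fin n)
    (hdet : (Matrix.of fun i j => (W i (e j)).coeff (rdeg (W i))).det ≠ 0) :
    ∑ i, rdeg (W i) ≤ ((W.submatrix id ⇑e).det).natDegree := by
  classical
  set ν : Fin k → ℕ := fun i => rdeg (W i) with hν
  set μ : ℕ := Finset.univ.sup ν with hμ
  have hνμ : ∀ i, ν i ≤ μ := fun i => Finset.le_sup (Finset.mem_univ i)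
  set M : Matrix (Fin k) (Fin k) (Polynomial F) := W.submatrix id ⇑e with hM
  set M' : Matrix (Fin k) (Fin k) (Polynomial F) :=
    Matrix.of fun i j => X ^ (μ - ν i) * M i j with hM'
  have hdegM : ∀ i j, (M i j).natDegree ≤ ν i := fun i j => natDegree_le_rdeg (W i) (e j)
  have hdegM' : ∀ i j, (M' i j).natDegree ≤ μ := by
    intro i j
    calc (M' i j).natDegree ≤ (μ - ν i) + (M i j).natDegree := by
          simpa [hM'] using natDegree_mul_le.trans (by simp)
      _ ≤ (μ - ν i) + ν i := by have := hdegM i j; omega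
      _ = μ := by have := hνμ i; omega
  have hcoeffM' : ∀ i j, (M' i j).coeff μ = (M i j).coeff (ν i) := by
    intro i j
    have : μ = ν i + (μ - ν i) := by have := hνμ i; omega
    have h2 := coeff_X_pow_mul (M i j) (μ - ν i) (ν i)
    rw [← this] at h2
    simpa [hM'] using h2
  -- coefficient of det M' at k * μ
  have hkey : (M'.det).coeff (k * μ) =
      (Matrix.of fun i j => (W i (e j)).coeff (rdeg (W i))).det := by
    rw [Matrix.det_apply, Matrix.det_apply, finset_sum_coeff]
    refine Finset.sum_congr rfl fun σ _ => ?_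
    rw [coeff_smul]
    congr 1
    have : k * μ = (Finset.univ : Finset (Fin k)).card * μ := by simp
    rw [this, coeff_prod_of_natDegree_le _ _ _ (fun p _ => hdegM' _ _)]
    refine Finset.prod_congr rfl fun i _ => ?_
    rw [hcoeffM']
    rfl
  have hplus : (∑ i, (μ - ν i)) + ∑ i, ν i = k * μ := by
    calc (∑ i, (μ - ν i)) + ∑ i, ν i = ∑ i : Fin k, ((μ - ν i) + ν i) :=
          Finset.sum_add_distrib.symm
      _ = ∑ _i : Fin k, μ := Finset.sum_congr rfl (fun i _ => by have := hνμ i; omega)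
      _ = k * μ := by simp [mul_comm]
  have hdetM' : M'.det = X ^ (∑ i, (μ - ν i)) * M.det := by
    have := Matrix.det_mul_column (fun i => (X : Polynomial F) ^ (μ - ν i)) M
    rw [hM', this, Finset.prod_pow_eq_pow_sum]
  have hne : (M'.det).coeff (k * μ) ≠ 0 := by rw [hkey]; exact hdet
  have hle : k * μ ≤ (M'.det).natDegree := le_natDegree_of_ne_zero hne
  have hMne : M.det ≠ 0 := by
    intro h0
    rw [hdetM', h0, mul_zero] at hne
    simp at hne
  rw [hdetM', natDegree_mul (pow_ne_zero _ Polynomial.X_ne_zero) hMne, natDegree_X_pow] at hle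
  show (∑ i, ν i) ≤ M.det.natDegree
  omega

lemma exists_minor_ne_zero (L : Matrix (Fin k) (Fin n) F)
    (h : LinearIndependent F (fun i => L i)) :
    ∃ e : Fin k ↪ Fin n, (Matrix.of fun i j => L i (e j)).det ≠ 0 := by
  classical
  -- columns span F^k
  have hinj : Function.Injective (Lᵀ.mulVecLin) := by
    rw [mulVecLin_transpose]
    intro x y hxy
    have := Fintype.linearIndependent_iff.mp h (x - y) ?_
    · funext i; have := this i; simpa [sub_eq_zero] using this
    · have : (x - y) ᵥ* L = 0 := by
        simp only [Matrix.coe_vecMulLinear] at hxy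
        rw [Matrix.sub_vecMul, hxy, sub_self]
      rw [← this]
      ext j
      simp [Matrix.vecMul, dotProduct, Finset.sum_apply, Pi.smul_apply, smul_eq_mul]
  have hrankT : Lᵀ.rank = k := by
    have := LinearMap.finrank_range_of_inj hinj
    simpa [Matrix.rank, this] using by simp [Module.finrank_pi]
  have hrankL : L.rank = k := by rw [← Matrix.rank_transpose]; exact hrankT
  have hspan : Submodule.span F (Set.range Lᵀ) = ⊤ := by
    have h1 : Module.finrank F (Submodule.span F (Set.range Lᵀ)) = k := by
      have := Matrix.rank_eq_finrank_span_cols L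
      rw [hrankL] at this
      exact this.symm
    apply Submodule.eq_top_of_finrank_eq
    rw [h1]; simp [Module.finrank_pi]
  obtain ⟨b, hbsub, hbspan, hbli⟩ := exists_linearIndependent F (Set.range Lᵀ)
  rw [hspan] at hbspan
  have hbfin : b.Finite := hbli.setFinite
  haveI : Fintype b := hbfin.fintype
  have hbbasis : Module.Basis b F (Fin k → F) := Module.Basis.mk hbli (by rw [Subtype.range_val, hbspan])
  have hcard : Fintype.card b = k := by
    have := Module.finrank_eq_card_basis hbbasis
    simpa [Module.finrank_pi] using this.symm
  -- choose column indices
  have hchoice : ∀ x : b, ∃ j : Fin n, Lᵀ j = (x : Fin k → F) := by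
    intro x
    obtain ⟨j, hj⟩ := hbsub x.2
    exact ⟨j, hj⟩
  choose c hc using hchoice
  have hcinj : Function.Injective c := by
    intro x y hxy
    apply Subtype.ext
    rw [← hc x, ← hc y, hxy]
  obtain ⟨E⟩ : Nonempty (Fin k ≃ b) := by
    rw [← Fintype.card_eq]
    simp [hcard]
  refine ⟨⟨fun i => c (E i), fun a b' hab => E.injective (hcinj hab)⟩, ?_⟩
  have hcols : LinearIndependent F (fun j : Fin k => (Matrix.of fun i j => L i (c (E j)))ᵀ j) := by
    have : (fun j : Fin k => (Matrix.of fun i j' => L i (c (E j')))ᵀ j)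
        = fun j : Fin k => ((E j : Fin k → F)) := by
      funext j
      rw [← hc (E j)]
      rfl
    rw [this]
    exact hbli.comp E E.injective
  have hU := Matrix.linearIndependent_cols_iff_isUnit.mp hcols
  have hdet := (Matrix.isUnit_iff_isUnit_det _).mp hU
  show (Matrix.of fun i j => L i (c (E j))).det ≠ 0
  intro h0
  rw [h0] at hdet
  simpa using hdet

lemma reduce (δ : ℕ) (C : Submodule (Polynomial F) (Fin n → Polynomial F)) :
    ∀ N : ℕ, ∀ W : Matrix (Fin k) (Fin n) (Polynomial F),
      (∑ i, rdeg (W i)) ≤ N →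
      (∀ i, W i ∈ C) →
      LinearIndependent (Polynomial F) (fun i => W i) →
      (∀ e : Fin k ↪ Fin n, ((W.submatrix id ⇑e).det).natDegree ≤ δ) →
      ∃ W' : Matrix (Fin k) (Fin n) (Polynomial F),
        (∀ i, W' i ∈ C) ∧ LinearIndependent (Polynomial F) (fun i => W' i) ∧
        (∑ i, rdeg (W' i)) ≤ δ := by
  classical
  intro N
  induction N using Nat.strong_induction_on with
  | _ N IH =>
  intro W hsum hmem hli hminor
  set ν : Fin k → ℕ := fun i => rdeg (W i) with hν
  set L : Matrix (Fin k) (Fin n) F := Matrix.of fun i j => (W i j).coeff (ν i) with hL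
  by_cases hLli : LinearIndependent F (fun i => L i)
  · obtain ⟨e, he⟩ := exists_minor_ne_zero L hLli
    exact ⟨W, hmem, hli, (sum_rdeg_le_of_minor W e he).trans (hminor e)⟩
  · obtain ⟨g, hg0, i1, hi1⟩ := Fintype.not_linearIndependent_iff.mp hLli
    set S : Finset (Fin k) := Finset.univ.filter (fun i => g i ≠ 0) with hS
    have hSne : S.Nonempty := ⟨i1, by simp [hS, hi1]⟩
    obtain ⟨i0, hi0S, hi0max⟩ := Finset.exists_mem_eq_sup S hSne ν
    set μ : ℕ := S.sup ν with hμ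
    have hgi0 : g i0 ≠ 0 := by simpa [hS] using hi0S
    have hνμ : ∀ i ∈ S, ν i ≤ μ := fun i hi => Finset.le_sup hi
    have hνi0 : ν i0 = μ := hi0max.symm
    set q : Fin k → Polynomial F := fun i => Polynomial.C (g i) * X ^ (μ - ν i) with hq
    have hqi0 : q i0 = Polynomial.C (g i0) := by simp [hq, hνi0]
    have hqS : ∀ i, i ∉ S → q i = 0 := by
      intro i hi
      have : g i = 0 := by by_contra h; exact hi (by simp [hS, h])
      simp [hq, this]
    set r : Fin n → Polynomial F := ∑ i, q i • W i with hr
    have hrj : ∀ j, r j = ∑ i, q i * W i j := by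
      intro j; rw [hr]; simp [Finset.sum_apply]
    -- coefficient of r j at μ vanishes
    have hcoeffr : ∀ j, (r j).coeff μ = 0 := by
      intro j
      rw [hrj j, finset_sum_coeff]
      have hterm : ∀ i, (q i * W i j).coeff μ = g i * L i j := by
        intro i
        by_cases hiS : i ∈ S
        · have hle := hνμ i hiS
          have hid : μ = ν i + (μ - ν i) := by omega
          have h2 := coeff_X_pow_mul (W i j) (μ - ν i) (ν i)
          rw [← hid] at h2
          calc (q i * W i j).coeff μ = g i * (X ^ (μ - ν i) * W i j).coeff μ := by
                rw [hq]; simp only []; rw [mul_assoc, coeff_C_mul]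
            _ = g i * L i j := by rw [h2]; rfl
        · have : g i = 0 := by by_contra h; exact hiS (by simp [hS, h])
          simp [hqS i hiS, this]
      rw [Finset.sum_congr rfl (fun i _ => hterm i)]
      have := congrFun hg0 j
      simpa [Finset.sum_apply] using this
    -- degree bound for r
    have hdegr : ∀ j, (r j).natDegree ≤ μ := by
      intro j
      rw [hrj j]
      apply Polynomial.natDegree_sum_le_of_forall_le
      intro i _
      by_cases hiS : i ∈ S
      · calc (q i * W i j).natDegree ≤ (q i).natDegree + (W i j).natDegree :=
              natDegree_mul_le
          _ ≤ (μ - ν i) + ν i := by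
              gcongr
              · simpa [hq] using natDegree_mul_le.trans (by simp)
              · exact natDegree_le_rdeg (W i) j
          _ ≤ μ := by have := hνμ i hiS; omega
      · simp [hqS i hiS]
    -- r ≠ 0
    have hrne : r ≠ 0 := by
      intro h0
      have := Fintype.linearIndependent_iff.mp hli q (by rw [← hr]; exact h0) i0
      rw [hqi0] at this
      exact hgi0 (by simpa using this)
    -- μ ≥ 1
    have hμpos : 1 ≤ μ := by
      by_contra h
      have hμ0 : μ = 0 := by omega
      apply hrne
      funext j
      have h1 : (r j).natDegree = 0 := by have := hdegr j; omega
      have := Polynomial.eq_C_of_natDegree_eq_zero h1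
      rw [this]
      have h2 := hcoeffr j
      rw [this] at h2
      rw [hμ0] at h2
      simp only [coeff_C_zero] at h2
      simp [h2]
    -- rdeg r ≤ μ - 1
    have hrdeg : rdeg r ≤ μ - 1 := by
      apply Finset.sup_le
      intro j _
      by_cases h0 : r j = 0
      · simp [h0]
      · have h1 : (r j).natDegree ≠ μ := by
          intro hEq
          apply h0
          have := hcoeffr j
          rw [← hEq] at this
          exact Polynomial.leadingCoeff_eq_zero.mp this
        have := hdegr j
        omega
    set W' : Matrix (Fin k) (Fin n) (Polynomial F) :=
      Matrix.of (Function.update (fun i => W i) i0 r) with hW'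
    have hW'app : ∀ i, W' i = if i = i0 then r else W i := by
      intro i; rw [hW']; exact Function.update_apply _ _ _ _
    -- membership
    have hmem' : ∀ i, W' i ∈ C := by
      intro i
      rw [hW'app]
      split
      · rw [hr]; exact Submodule.sum_mem _ fun i _ => Submodule.smul_mem _ _ (hmem i)
      · exact hmem i
    -- linear independence
    have hli' : LinearIndependent (Polynomial F) (fun i => W' i) := by
      rw [Fintype.linearIndependent_iff]
      intro a ha
      set b : Fin k → Polynomial F :=
        fun i => (if i = i0 then 0 else a i) + a i0 * q i with hb
      have hbW : ∑ i, b i • W i = 0 := by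
        have e1 : ∑ i, b i • W i
            = ∑ i, ((if i = i0 then (0 : Polynomial F) else a i) • W i)
              + a i0 • ∑ i, q i • W i := by
          rw [Finset.smul_sum, ← Finset.sum_add_distrib]
          refine Finset.sum_congr rfl fun i _ => ?_
          rw [hb, add_smul, smul_smul]
        have e2 : ∑ i, a i • W' i
            = ∑ i, ((if i = i0 then (0 : Polynomial F) else a i) • W i)
              + ∑ i, (if i = i0 then a i0 • r else 0) := by
          rw [← Finset.sum_add_distrib]
          refine Finset.sum_congr rfl fun i _ => ?_
          rw [hW'app]
          by_cases h : i = i0 <;> simp [h]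
        have e3 : ∑ i, (if i = i0 then a i0 • r else (0 : Fin n → Polynomial F)) = a i0 • r := by
          rw [Finset.sum_ite_eq' Finset.univ i0 (fun _ => a i0 • r)]
          simp
        rw [e1, ← hr]
        rw [e2, e3] at ha
        exact ha
      have hball := Fintype.linearIndependent_iff.mp hli b hbW
      have hai0 : a i0 = 0 := by
        have := hball i0
        simp only [hb, eq_self_iff_true, if_true, zero_add, hqi0] at this
        rcases mul_eq_zero.mp this with h | h
        · exact h
        · exact absurd h (by simpa using hgi0)
      intro i
      by_cases h : i = i0
      · rw [h]; exact hai0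
      · have := hball i
        simp only [hb] at this
        simpa [h, hai0] using this
    -- minors
    have hminor' : ∀ e : Fin k ↪ Fin n, ((W'.submatrix id ⇑e).det).natDegree ≤ δ := by
      intro e
      have hsub : W'.submatrix id ⇑e
          = (W.submatrix id ⇑e).updateRow i0 (∑ i, q i • (W.submatrix id ⇑e) i) := by
        apply Matrix.ext
        intro i j
        rw [Matrix.updateRow_apply, Matrix.submatrix_apply, Matrix.submatrix_apply]
        simp only [id_eq]
        rw [hW'app]
        by_cases h : i = i0
        · rw [if_pos h, if_pos h, hrj]
          simp [Finset.sum_apply]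
        · rw [if_neg h, if_neg h]
      rw [hsub, Matrix.det_updateRow_sum]
      rw [hqi0, smul_eq_mul]
      by_cases h0 : ((W.submatrix id ⇑e).det) = 0
      · simp [h0]
      · rw [Polynomial.natDegree_C_mul (by simpa using hgi0)]
        exact hminor e
    -- sum decreased
    have hsum' : (∑ i, rdeg (W' i)) < ∑ i, rdeg (W i) := by
      have hupdate : (fun i => rdeg (W' i)) = Function.update (fun i => rdeg (W i)) i0 (rdeg r) := by
        funext i
        rw [hW'app, Function.update_apply]
        by_cases h : i = i0 <;> simp [h]
      calc (∑ i, rdeg (W' i)) = ∑ i, Function.update (fun i => rdeg (W i)) i0 (rdeg r) i := by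
            rw [hupdate]
        _ = rdeg r + ∑ i ∈ Finset.univ \ {i0}, rdeg (W i) :=
            Finset.sum_update_of_mem (Finset.mem_univ i0) _ _
        _ < ν i0 + ∑ i ∈ Finset.univ \ {i0}, rdeg (W i) := by
            have : rdeg r < ν i0 := by rw [hνi0]; omega
            omega
        _ = ∑ i, rdeg (W i) := by
            rw [← Finset.erase_eq]
            exact Finset.add_sum_erase _ _ (Finset.mem_univ i0)
    exact IH (∑ i, rdeg (W' i)) (lt_of_lt_of_le hsum' hsum) W' le_rfl hmem' hli' hminor'


open scoped Classical in
lemma exists_low_weight {ι : Type*} [Fintype ι] [DecidableEq ι] {d : ℕ}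
    (hd : 0 < d) (hdN : d ≤ Fintype.card ι)
    (U : Submodule F (ι → F)) (hU : (d : Cardinal) ≤ Module.rank F U) :
    ∃ u ∈ U, u ≠ 0 ∧ (Finset.univ.filter fun a => u a ≠ 0).card ≤ Fintype.card ι - d + 1 := by
  classical
  obtain ⟨S, hSsub, hScard⟩ :=
    Finset.exists_subset_card_eq (s := (Finset.univ : Finset ι)) (n := d - 1)
      (by rw [Finset.card_univ]; omega)
  let π : U →ₗ[F] (↥(S : Set ι) → F) :=
    { toFun := fun u s => u.1 s.1
      map_add' := fun x y => rfl
      map_smul' := fun c x => rfl }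
  have hnotinj : ¬ Function.Injective π := by
    intro hinj
    have h1 := LinearMap.rank_le_of_injective _ hinj
    have h2 : Module.rank F (↥(S : Set ι) → F) = (S.card : Cardinal) := by
      rw [rank_fun']
      simp
    rw [h2, hScard] at h1
    have := hU.trans h1
    rw [Nat.cast_le] at this
    omega
  have hker : LinearMap.ker π ≠ ⊥ := fun h => hnotinj (LinearMap.ker_eq_bot.mp h)
  obtain ⟨u, huker, hune⟩ := (Submodule.ne_bot_iff _).mp hker
  have hu0 : π u = 0 := huker
  refine ⟨u.1, u.2, ?_, ?_⟩
  · intro h; exact hune (by exact_mod_cast Subtype.ext h)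
  · have hsupp : (Finset.univ.filter fun a => u.1 a ≠ 0) ⊆ Finset.univ \ S := by
      intro a ha
      simp only [Finset.mem_filter] at ha
      rw [Finset.mem_sdiff]
      refine ⟨Finset.mem_univ a, fun haS => ha.2 ?_⟩
      exact congrFun hu0 ⟨a, haS⟩
    calc (Finset.univ.filter fun a => u.1 a ≠ 0).card ≤ (Finset.univ \ S).card :=
          Finset.card_le_card hsupp
      _ = Fintype.card ι - (d - 1) := by
          rw [Finset.card_sdiff_of_subset hSsub, Finset.card_univ, hScard]
      _ ≤ Fintype.card ι - d + 1 := by omega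

end SingAux

open SingAux

/-- The generalized Singleton bound for convolutional codes: an `(n,k)` convolutional code
of degree `δ` has free distance at most `(n-k)(⌊δ/k⌋+1) + δ + 1`. -/
theorem free_distance_singleton_bound {F : Type*} [Field F] [Fintype F] {n k δ : ℕ}
    (hk : 0 < k) (hkn : k ≤ n)
    (C : Submodule (Polynomial F) (Fin n → Polynomial F))
    (hrank : Module.rank (Polynomial F) C = k)
    (G : Matrix (Fin k) (Fin n) (Polynomial F))
    (hgen : C = LinearMap.range (Matrix.vecMulLinear G))
    (hδ : δ = maxMinorDeg G) :
    sInf {w : ℕ | ∃ v ∈ C, v ≠ 0 ∧ w = polyWt v} ≤ (n - k) * (δ / k + 1) + δ + 1 := by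
  classical
  subst hgen
  -- rows of G belong to C
  have hGmem : ∀ i, G i ∈ LinearMap.range (Matrix.vecMulLinear G) := by
    intro i
    rw [range_vecMulLinear]
    exact Submodule.subset_span ⟨i, rfl⟩
  -- rows of G are linearly independent
  have hinj : Function.Injective (Matrix.vecMulLinear G) := by
    obtain ⟨k', bC⟩ := Submodule.basisOfPid (Pi.basisFun (Polynomial F) (Fin n))
      (LinearMap.range (Matrix.vecMulLinear G))
    have hk' : k' = k := by
      have h1 := rank_eq_card_basis bC
      rw [hrank] at h1
      simpa using h1.symm
    let eC : ↥(LinearMap.range (Matrix.vecMulLinear G)) ≃ₗ[Polynomial F] (Fin k' → Polynomial F) :=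
      bC.equivFun
    rw [hk'] at eC
    let π : (Fin k → Polynomial F) →ₗ[Polynomial F] ↥(LinearMap.range (Matrix.vecMulLinear G)) :=
      (Matrix.vecMulLinear G).rangeRestrict
    have hπsurj : Function.Surjective π := LinearMap.surjective_rangeRestrict _
    have hendo : Function.Surjective (eC.toLinearMap ∘ₗ π) := eC.surjective.comp hπsurj
    have hendoinj : Function.Injective (eC.toLinearMap ∘ₗ π) :=
      IsNoetherian.injective_of_surjective_endomorphism _ hendo
    have hπinj : Function.Injective π := by
      intro x y hxy
      exact hendoinj (by simp [LinearMap.comp_apply, hxy])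
    intro x y hxy
    exact hπinj (Subtype.ext hxy)
  have hli : LinearIndependent (Polynomial F) (fun i => G i) := by
    rw [Fintype.linearIndependent_iff]
    intro g hg i
    have h0 : Matrix.vecMulLinear G g = Matrix.vecMulLinear G 0 := by
      rw [map_zero]
      rw [Matrix.vecMulLinear_apply]
      rw [← hg]
      funext j
      simp [Matrix.vecMul, dotProduct, Finset.sum_apply]
    exact congrFun (hinj h0) i
  -- minors of G are bounded by δ
  have hminor : ∀ e : Fin k ↪ Fin n, ((G.submatrix id ⇑e).det).natDegree ≤ δ := by
    intro e
    rw [hδ, maxMinorDeg]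
    exact Finset.le_sup (f := fun e : Fin k ↪ Fin n => ((G.submatrix id ⇑e).det).natDegree)
      (Finset.mem_univ e)
  -- reduce
  obtain ⟨W, hWmem, hWli, hWdeg⟩ :=
    SingAux.reduce δ (LinearMap.range (Matrix.vecMulLinear G)) (∑ i, rdeg (G i)) G le_rfl
      hGmem hli hminor
  set m : ℕ := δ / k with hm
  set ν : Fin k → ℕ := fun i => rdeg (W i) with hν
  set d : ℕ := k * (m + 1) - δ with hd
  have hdm := Nat.div_add_mod δ k
  have hmod : δ % k < k := Nat.mod_lt δ hk
  have hkm1 : δ + 1 ≤ k * (m + 1) := by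
    have e1 : k * (m + 1) = k * (δ / k) + k := by rw [hm]; ring
    omega
  have hdpos : 0 < d := by omega
  have hdlek : d ≤ k * (m + 1) := by omega
  have hkmnm : k * (m + 1) ≤ n * (m + 1) := Nat.mul_le_mul_right _ hkn
  let ι := Σ i : Fin k, Fin (m + 1 - ν i)
  let v : ι → (Fin n → Polynomial F) := fun p => (X : Polynomial F) ^ (p.2 : ℕ) • W p.1
  have hcard : d ≤ Fintype.card ι := by
    have h1 : Fintype.card ι = ∑ i, (m + 1 - ν i) := by simp [ι]
    rw [h1]
    have hWdeg' : (∑ i, ν i) ≤ δ := hWdeg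
    have h2 : k * (m + 1) ≤ (∑ i, (m + 1 - ν i)) + ∑ i, ν i := by
      calc k * (m + 1) = ∑ _i : Fin k, (m + 1) := by simp [mul_comm]
        _ ≤ ∑ i : Fin k, ((m + 1 - ν i) + ν i) := Finset.sum_le_sum (fun i _ => by omega)
        _ = (∑ i, (m + 1 - ν i)) + ∑ i, ν i := Finset.sum_add_distrib
    omega
  let Q : Submodule F (Fin n → Polynomial F) :=
    Submodule.pi Set.univ fun _ : Fin n => Polynomial.degreeLE F (m : ℕ)
  have hvQ : ∀ p : ι, v p ∈ Q := by
    rintro ⟨i, j⟩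
    rw [Submodule.mem_pi]
    intro j' _
    rw [Polynomial.mem_degreeLE]
    have hj : (j : ℕ) + ν i ≤ m := by have := j.2; omega
    have hv1 : v ⟨i, j⟩ j' = (X : Polynomial F) ^ (j : ℕ) * W i j' := by
      simp [v, Pi.smul_apply, smul_eq_mul]
    rw [hv1]
    calc degree ((X : Polynomial F) ^ (j : ℕ) * W i j')
        ≤ degree ((X : Polynomial F) ^ (j : ℕ)) + degree (W i j') := degree_mul_le _ _
      _ ≤ ((j : ℕ) : WithBot ℕ) + ((ν i : ℕ) : WithBot ℕ) := by
          gcongr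
          · exact le_of_eq (degree_X_pow _)
          · exact degree_le_natDegree.trans (by exact_mod_cast natDegree_le_rdeg (W i) j')
      _ = (((j : ℕ) + ν i : ℕ) : WithBot ℕ) := by push_cast; rfl
      _ ≤ ((m : ℕ) : WithBot ℕ) := by exact_mod_cast hj
  have hvli : LinearIndependent F v := by
    rw [Fintype.linearIndependent_iff]
    intro a ha
    have hsum : ∑ i : Fin k,
        (∑ j : Fin (m + 1 - ν i), Polynomial.C (a ⟨i, j⟩) * X ^ (j : ℕ)) • W i = 0 := by
      rw [← ha]
      rw [← Finset.univ_sigma_univ, Finset.sum_sigma]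
      refine Finset.sum_congr rfl fun i _ => ?_
      rw [Finset.sum_smul]
      refine Finset.sum_congr rfl fun j _ => ?_
      have hCalg : Polynomial.C (a ⟨i, j⟩) = algebraMap F (Polynomial F) (a ⟨i, j⟩) := rfl
      rw [hCalg, ← smul_smul, algebraMap_smul]
    have hP := Fintype.linearIndependent_iff.mp hWli _ hsum
    intro p
    obtain ⟨i, j⟩ := p
    have := congrArg (fun q => Polynomial.coeff q (j : ℕ)) (hP i)
    simp only [finset_sum_coeff, coeff_C_mul, coeff_X_pow, mul_ite, mul_one, mul_zero,
      coeff_zero] at this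
    simp only [Fin.val_eq_val] at this
    rw [Finset.sum_ite_eq] at this
    simpa using this
  let coefMap : (Fin n → Polynomial F) →ₗ[F] (Fin n × Fin (m + 1) → F) :=
    { toFun := fun w p => (w p.1).coeff (p.2 : ℕ)
      map_add' := fun x y => by funext p; simp
      map_smul' := fun c x => by funext p; simp }
  have hQinj : ∀ w ∈ Q, coefMap w = 0 → w = 0 := by
    intro w hw h0
    funext j'
    apply Polynomial.ext
    intro t
    simp only [Pi.zero_apply, coeff_zero]
    by_cases ht : t ≤ m
    · have := congrFun h0 (j', ⟨t, by omega⟩)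
      simpa [coefMap] using this
    · have hdeg : (w j').degree ≤ ((m : ℕ) : WithBot ℕ) :=
        Polynomial.mem_degreeLE.mp (hw j' trivial)
      apply Polynomial.coeff_eq_zero_of_degree_lt
      refine lt_of_le_of_lt hdeg ?_
      exact_mod_cast (by omega : m < t)
  have hspanQ : Submodule.span F (Set.range v) ≤ Q := by
    rw [Submodule.span_le]
    rintro _ ⟨p, rfl⟩
    exact hvQ p
  have hdisj : Disjoint (Submodule.span F (Set.range v)) (LinearMap.ker coefMap) := by
    rw [Submodule.disjoint_def]
    intro x hx hker
    exact hQinj x (hspanQ hx) (LinearMap.mem_ker.mp hker)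
  have huli : LinearIndependent F (⇑coefMap ∘ v) := hvli.map hdisj
  set U : Submodule F (Fin n × Fin (m + 1) → F) :=
    Submodule.span F (Set.range (⇑coefMap ∘ v)) with hU
  have hrankU : (d : Cardinal) ≤ Module.rank F U := by
    rw [hU, rank_span huli, Cardinal.mk_fintype,
      Set.card_range_of_injective huli.injective]
    exact_mod_cast hcard
  have hcardprod : Fintype.card (Fin n × Fin (m + 1)) = n * (m + 1) := by simp
  obtain ⟨u, huU, hune, hwt⟩ := SingAux.exists_low_weight hdpos
    (by rw [hcardprod]; omega) U hrankU
  rw [hcardprod] at hwt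
  have hUeq : U = Submodule.map coefMap (Submodule.span F (Set.range v)) := by
    rw [hU, Submodule.map_span, Set.range_comp]
  rw [hUeq] at huU
  obtain ⟨v0, hv0span, hv0eq⟩ := Submodule.mem_map.mp huU
  have hv0C : v0 ∈ LinearMap.range (Matrix.vecMulLinear G) := by
    have hle : Submodule.span F (Set.range v) ≤
        (LinearMap.range (Matrix.vecMulLinear G)).restrictScalars F := by
      rw [Submodule.span_le]
      rintro _ ⟨p, rfl⟩
      exact Submodule.smul_mem _ _ (hWmem p.1)
    exact hle hv0span
  have hv0ne : v0 ≠ 0 := by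
    rintro rfl
    exact hune (by rw [← hv0eq]; simp)
  have hv0Q : v0 ∈ Q := hspanQ hv0span
  -- weight computation
  have hwt0 : polyWt v0 ≤ n * (m + 1) - d + 1 := by
    have hsupp : ∀ j', (v0 j').support.card
        = ∑ t : Fin (m + 1), if (v0 j').coeff (t : ℕ) ≠ 0 then 1 else 0 := by
      intro j'
      have hdeg : (v0 j').natDegree ≤ m :=
        Polynomial.natDegree_le_iff_degree_le.mpr (Polynomial.mem_degreeLE.mp (hv0Q j' trivial))
      have hset : (v0 j').support
          = (Finset.range (m + 1)).filter (fun t => (v0 j').coeff t ≠ 0) := by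
        ext t
        simp only [Polynomial.mem_support_iff, Finset.mem_filter, Finset.mem_range]
        constructor
        · intro h
          exact ⟨by have := Polynomial.le_natDegree_of_ne_zero h; omega, h⟩
        · exact And.right
      rw [hset, Finset.card_filter,
        ← Fin.sum_univ_eq_sum_range (fun t => if (v0 j').coeff t ≠ 0 then 1 else 0)]
    have hwcount : polyWt v0
        = (Finset.univ.filter fun p : Fin n × Fin (m + 1) => u p ≠ 0).card := by
      rw [Finset.card_filter, Fintype.sum_prod_type, polyWt]
      refine Finset.sum_congr rfl fun j' _ => ?_
      rw [hsupp j']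
      refine Finset.sum_congr rfl fun t _ => ?_
      have : u (j', t) = (v0 j').coeff (t : ℕ) := by rw [← hv0eq]; rfl
      rw [this]
    rw [hwcount]
    convert hwt using 2
  have hfinal : polyWt v0 ≤ (n - k) * (m + 1) + δ + 1 := by
    have e2 : (n - k) * (m + 1) = n * (m + 1) - k * (m + 1) := Nat.sub_mul _ _ _
    omega
  exact le_trans (Nat.sInf_le ⟨v0, hv0C, hv0ne, rfl⟩) hfinal
end

section
/- Let F be a finite field, k ≤ n, and G_0, G_1, ..., G_m ∈ F^{k×n} with G_0 of rank k. For j ≥ 0 define d_j^c = min{ wt((u_0, ..., u_j) G_j^c) : u_i ∈ F^k, u_0 ≠ 0 }, where wt is the Hamming weight on F^{(j+1)n}. Then d_j^c ≤ (n-k)(j+1) + 1 for every j ≥ 0; moreover, if d_j^c = (n-k)(j+1) + 1 for some j, then d_i^c = (n-k)(i+1) + 1 for all 0 ≤ i ≤ j. -/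
open Matrix

/-- The `j`-th truncated generator matrix `G_j^c`: the `(j+1)k × (j+1)n` block matrix whose
`(r,s)` block is `G_{s-r}` for `s ≥ r` and `0` otherwise. -/
def truncGen {F : Type*} [Field F] {k n : ℕ} (G : ℕ → Matrix (Fin k) (Fin n) F) (j : ℕ) :
    Matrix (Fin (j + 1) × Fin k) (Fin (j + 1) × Fin n) F :=
  Matrix.of fun p c => if (p.1 : ℕ) ≤ (c.1 : ℕ) then G ((c.1 : ℕ) - (p.1 : ℕ)) p.2 c.2 else 0

/-- The `j`-th column distance determined by coefficient matrices `G_0, G_1, ...`: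
`d_j^c = min { wt((u_0,…,u_j) G_j^c) : u_0 ≠ 0 }`. -/
noncomputable def dcolT {F : Type*} [Field F] {k n : ℕ}
    (G : ℕ → Matrix (Fin k) (Fin n) F) (j : ℕ) : ℕ :=
  sInf {w : ℕ | ∃ u : Fin (j + 1) → Fin k → F, u 0 ≠ 0 ∧
    w = Nat.card {c : Fin (j + 1) × Fin n //
          Matrix.vecMul (fun p => u p.1 p.2) (truncGen G j) c ≠ 0}}

section Helpers

variable {F : Type*} [Field F] [Fintype F] {k n : ℕ}

open scoped Classical in
lemma wt_eq_sum {ι : Type*} [Fintype ι] (v : ι → F) :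
    Nat.card {c : ι // v c ≠ 0} = ∑ c, if v c ≠ 0 then 1 else 0 := by
  rw [Nat.card_eq_fintype_card, Fintype.card_subtype, Finset.card_filter]

open scoped Classical in
lemma sum_ind_le {v : Fin n → F} (s : Finset (Fin n)) (h : ∀ c ∈ s, v c = 0) :
    (∑ c, if v c ≠ 0 then 1 else 0) ≤ n - s.card := by
  rw [← Finset.card_filter]
  calc (Finset.univ.filter fun c => v c ≠ 0).card
      ≤ (Finset.univ \ s).card := by
        apply Finset.card_le_card
        intro c hc
        simp only [Finset.mem_filter] at hc
        simp only [Finset.mem_sdiff, Finset.mem_univ, true_and]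
        exact fun hs => hc.2 (h c hs)
    _ = n - s.card := by
        rw [Finset.card_sdiff_of_subset (Finset.subset_univ _), Finset.card_univ, Fintype.card_fin]

open scoped Classical in
lemma exists_coset_rep (hkn : k ≤ n) {A : Matrix (Fin k) (Fin n) F} (hA : A.rank = k)
    (w0 : Fin n → F) :
    ∃ x : Fin k → F, (∑ c : Fin n, if w0 c + (x ᵥ* A) c ≠ 0 then 1 else 0) ≤ n - k := by
  obtain ⟨b, hb₁, hb₂, hb₃⟩ := exists_linearIndependent F (Set.range Aᵀ)
  haveI : Fintype b := Fintype.ofFinite _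
  have hcardb : b.toFinset.card = k := by
    rw [← finrank_span_set_eq_card hb₃, hb₂, ← show A.rank = Module.finrank F (Submodule.span F (Set.range Aᵀ)) from Matrix.rank_eq_finrank_span_cols A, hA]
  have hspan : Submodule.span F b = ⊤ := by
    apply Submodule.eq_top_of_finrank_eq
    rw [hb₂, ← show A.rank = Module.finrank F (Submodule.span F (Set.range Aᵀ)) from Matrix.rank_eq_finrank_span_cols A, hA, Module.finrank_fin_fun]
  -- choose column indices
  have hf : ∀ v : b, ∃ c : Fin n, Aᵀ c = (v : Fin k → F) := fun v => hb₁ v.2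
  choose f hfspec using hf
  have hfinj : Function.Injective f := by
    intro v w hvw
    apply Subtype.ext
    rw [← hfspec v, ← hfspec w, hvw]
  -- the evaluation map
  let φ : (Fin k → F) →ₗ[F] (b → F) :=
    { toFun := fun x v => x ⬝ᵥ (v : Fin k → F)
      map_add' := by intro x y; funext v; simp [add_dotProduct]
      map_smul' := by intro c x; funext v; simp [smul_dotProduct] }
  have hφinj : Function.Injective φ := by
    rw [← LinearMap.ker_eq_bot, LinearMap.ker_eq_bot']
    intro x hx
    have hzero : ∀ y : Fin k → F, x ⬝ᵥ y = 0 := by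
      let ψ : (Fin k → F) →ₗ[F] F :=
        { toFun := fun y => x ⬝ᵥ y
          map_add' := by intro y z; simp [dotProduct_add]
          map_smul' := by intro c y; simp [dotProduct_smul] }
      have hψ : ∀ y ∈ Submodule.span F b, ψ y = 0 := by
        intro y hy
        have hker : Submodule.span F b ≤ LinearMap.ker ψ := by
          rw [Submodule.span_le]
          intro w hw
          have := congrFun hx ⟨w, hw⟩
          simpa [ψ, φ] using this
        simpa using hker hy
      intro y
      have := hψ y (by rw [hspan]; trivial)
      simpa [ψ] using this
    funext r
    have := hzero (Pi.single r 1)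
    rwa [dotProduct_single, mul_one] at this
  have hφsurj : Function.Surjective φ := by
    have hfr : Module.finrank F (Fin k → F) = Module.finrank F (b → F) := by
      rw [Module.finrank_fin_fun, Module.finrank_fintype_fun_eq_card,
        ← Set.toFinset_card, hcardb]
    exact (LinearMap.injective_iff_surjective_of_finrank_eq_finrank hfr).mp hφinj
  obtain ⟨x, hx⟩ := hφsurj (fun v => -(w0 (f v)))
  refine ⟨x, ?_⟩
  have hz : ∀ v : b, w0 (f v) + (x ᵥ* A) (f v) = 0 := by
    intro v
    have h1 : (x ᵥ* A) (f v) = x ⬝ᵥ (v : Fin k → F) := by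
      rw [← hfspec v]
      simp [Matrix.vecMul, dotProduct, Matrix.transpose_apply]
    have h2 : x ⬝ᵥ (v : Fin k → F) = -(w0 (f v)) := congrFun hx v
    rw [h1, h2, add_neg_cancel]
  have himg : (Finset.univ.image f).card = k := by
    rw [Finset.card_image_of_injective _ hfinj, Finset.card_univ, ← Set.toFinset_card, hcardb]
  calc (∑ c : Fin n, if w0 c + (x ᵥ* A) c ≠ 0 then 1 else 0)
      ≤ n - (Finset.univ.image f).card := by
        apply sum_ind_le
        intro c hc
        obtain ⟨v, _, rfl⟩ := Finset.mem_image.mp hc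
        exact hz v
    _ = n - k := by rw [himg]

open scoped Classical in
lemma trunc_vecMul (G : ℕ → Matrix (Fin k) (Fin n) F) (j : ℕ)
    (u : Fin (j + 1) → Fin k → F) (c1 : Fin (j + 1)) (c2 : Fin n) :
    Matrix.vecMul (fun p : Fin (j + 1) × Fin k => u p.1 p.2) (truncGen G j) (c1, c2)
      = ∑ p1 : Fin (j + 1), if (p1 : ℕ) ≤ (c1 : ℕ) then
          (u p1 ᵥ* G ((c1 : ℕ) - (p1 : ℕ))) c2 else 0 := by
  simp only [Matrix.vecMul, dotProduct, truncGen, Matrix.of_apply, Fintype.sum_prod_type]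
  apply Finset.sum_congr rfl
  intro p1 _
  split_ifs with h
  · simp
  · simp

open scoped Classical in
lemma dcolT_zero_le (hk : 0 < k) (hkn : k ≤ n) (G : ℕ → Matrix (Fin k) (Fin n) F) :
    dcolT G 0 ≤ (n - k) + 1 := by
  have hcard : Fintype.card (Fin (k - 1) → F) < Fintype.card (Fin k → F) := by
    rw [Fintype.card_fun, Fintype.card_fun, Fintype.card_fin, Fintype.card_fin]
    exact Nat.pow_lt_pow_right Fintype.one_lt_card (by omega)
  have hk1n : k - 1 ≤ n := by omega
  obtain ⟨a, b, hab, hmap⟩ := Fintype.exists_ne_map_eq_of_card_lt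
    (fun x : Fin k → F => fun i : Fin (k - 1) => (x ᵥ* G 0) (Fin.castLE hk1n i)) hcard
  set x := a - b with hxdef
  have hx0 : x ≠ 0 := sub_ne_zero.mpr hab
  have hvan : ∀ i : Fin (k - 1), (x ᵥ* G 0) (Fin.castLE hk1n i) = 0 := by
    intro i
    have := congrFun hmap i
    rw [hxdef, Matrix.sub_vecMul]
    simp only [Pi.sub_apply]
    rw [this, sub_self]
  set u : Fin (0 + 1) → Fin k → F := fun _ => x with hudef
  refine le_trans (Nat.sInf_le ⟨u, hx0, rfl⟩) ?_
  rw [wt_eq_sum]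
  have hval : ∀ (c1 : Fin (0 + 1)) (c2 : Fin n),
      Matrix.vecMul (fun p => u p.1 p.2) (truncGen G 0) (c1, c2) = (x ᵥ* G 0) c2 := by
    intro c1 c2
    rw [trunc_vecMul]
    simp [Fin.sum_univ_succ, Fin.val_eq_zero, hudef]
  calc (∑ c : Fin (0 + 1) × Fin n,
        if Matrix.vecMul (fun p => u p.1 p.2) (truncGen G 0) c ≠ 0 then 1 else 0)
      = ∑ c2 : Fin n, if (x ᵥ* G 0) c2 ≠ 0 then 1 else 0 := by
        rw [Fintype.sum_prod_type]
        rw [Fin.sum_univ_one]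
        exact Finset.sum_congr rfl fun c2 _ => by rw [hval 0 c2]
    _ ≤ n - (Finset.univ.image (Fin.castLE hk1n)).card := by
        apply sum_ind_le
        intro c hc
        obtain ⟨i, _, rfl⟩ := Finset.mem_image.mp hc
        exact hvan i
    _ ≤ (n - k) + 1 := by
        rw [Finset.card_image_of_injective _ (Fin.castLE_injective hk1n),
          Finset.card_univ, Fintype.card_fin]
        omega

open scoped Classical in
lemma dcolT_succ_le (hk : 0 < k) (hkn : k ≤ n) (G : ℕ → Matrix (Fin k) (Fin n) F)
    (hG0 : (G 0).rank = k) (j : ℕ) :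
    dcolT G (j + 1) ≤ dcolT G j + (n - k) := by
  have hne : {w : ℕ | ∃ u : Fin (j + 1) → Fin k → F, u 0 ≠ 0 ∧
      w = Nat.card {c : Fin (j + 1) × Fin n //
        Matrix.vecMul (fun p => u p.1 p.2) (truncGen G j) c ≠ 0}}.Nonempty := by
    refine ⟨_, fun _ _ => 1, ?_, rfl⟩
    intro h
    have := congrFun h ⟨0, hk⟩
    simp at this
  obtain ⟨u, hu0, hw⟩ := Nat.sInf_mem hne
  set w0 : Fin n → F := fun c2 => ∑ p1 : Fin (j + 1), (u p1 ᵥ* G (j + 1 - (p1 : ℕ))) c2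
    with hw0
  obtain ⟨x, hxle⟩ := exists_coset_rep hkn hG0 w0
  set u' : Fin (j + 1 + 1) → Fin k → F := Fin.snoc u x with hu'
  have hu'0 : u' 0 ≠ 0 := by
    have h0 : u' 0 = u 0 := by
      rw [hu', show (0 : Fin (j + 1 + 1)) = Fin.castSucc 0 by simp, Fin.snoc_castSucc]
    rw [h0]; exact hu0
  refine le_trans (Nat.sInf_le ⟨u', hu'0, rfl⟩) ?_
  rw [wt_eq_sum]
  have hcast : ∀ (c1 : Fin (j + 1)) (c2 : Fin n),
      Matrix.vecMul (fun p => u' p.1 p.2) (truncGen G (j + 1)) (c1.castSucc, c2)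
        = Matrix.vecMul (fun p => u p.1 p.2) (truncGen G j) (c1, c2) := by
    intro c1 c2
    rw [trunc_vecMul, trunc_vecMul, Fin.sum_univ_castSucc]
    have hlast : (if ((Fin.last (j + 1) : Fin (j + 1 + 1)) : ℕ) ≤ ((c1.castSucc : Fin (j+1+1)) : ℕ) then
        (u' (Fin.last (j + 1)) ᵥ* G (((c1.castSucc : Fin (j+1+1)) : ℕ) - ((Fin.last (j + 1) : Fin (j+1+1)) : ℕ))) c2 else 0) = 0 := by
      refine if_neg ?_
      simp only [Fin.val_last, Fin.coe_castSucc]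
      exact Nat.not_le.mpr c1.isLt
    rw [hlast, add_zero]
    apply Finset.sum_congr rfl
    intro p1 _
    simp [Fin.coe_castSucc, Fin.snoc_castSucc, hu']
  have hlastrow : ∀ c2 : Fin n,
      Matrix.vecMul (fun p => u' p.1 p.2) (truncGen G (j + 1)) (Fin.last (j + 1), c2)
        = w0 c2 + (x ᵥ* G 0) c2 := by
    intro c2
    rw [trunc_vecMul, Fin.sum_univ_castSucc]
    have h1 : ∀ p1 : Fin (j + 1),
        (if ((p1.castSucc : Fin (j+1+1)) : ℕ) ≤ ((Fin.last (j + 1) : Fin (j+1+1)) : ℕ) then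
          (u' p1.castSucc ᵥ* G (((Fin.last (j + 1) : Fin (j+1+1)) : ℕ) - ((p1.castSucc : Fin (j+1+1)) : ℕ))) c2 else 0)
          = (u p1 ᵥ* G (j + 1 - (p1 : ℕ))) c2 := by
      intro p1
      rw [if_pos (show ((p1.castSucc : Fin (j+1+1)) : ℕ) ≤ ((Fin.last (j + 1) : Fin (j+1+1)) : ℕ) from by
        simp only [Fin.val_last, Fin.coe_castSucc]; exact Nat.le_of_lt p1.isLt)]
      simp [Fin.snoc_castSucc, Fin.val_last, Fin.coe_castSucc, hu']
    rw [Finset.sum_congr rfl (fun p1 _ => h1 p1), if_pos (le_refl _)]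
    simp [hu', Fin.snoc_last, Fin.val_last, hw0]
  calc (∑ c : Fin (j + 1 + 1) × Fin n,
        if Matrix.vecMul (fun p => u' p.1 p.2) (truncGen G (j + 1)) c ≠ 0 then 1 else 0)
      = ∑ c1 : Fin (j + 1 + 1), ∑ c2 : Fin n,
          if Matrix.vecMul (fun p => u' p.1 p.2) (truncGen G (j + 1)) (c1, c2) ≠ 0 then 1 else 0 :=
        Fintype.sum_prod_type _
    _ = (∑ c1 : Fin (j + 1), ∑ c2 : Fin n,
          if Matrix.vecMul (fun p => u p.1 p.2) (truncGen G j) (c1, c2) ≠ 0 then 1 else 0)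
        + ∑ c2 : Fin n, if w0 c2 + (x ᵥ* G 0) c2 ≠ 0 then 1 else 0 := by
        rw [Fin.sum_univ_castSucc]
        congr 1
        · exact Finset.sum_congr rfl fun c1 _ => Finset.sum_congr rfl fun c2 _ => by
            rw [hcast c1 c2]
        · exact Finset.sum_congr rfl fun c2 _ => by rw [hlastrow c2]
    _ ≤ dcolT G j + (n - k) := by
        refine add_le_add (le_of_eq ?_) hxle
        rw [show dcolT G j = _ from hw, wt_eq_sum, Fintype.sum_prod_type]

end Helpers

/-- Column distances satisfy the block-code Singleton bound `d_j^c ≤ (n-k)(j+1)+1`; moreover,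
if equality holds at time `j`, it holds at every earlier time `i ≤ j`. -/
theorem column_distance_singleton_bound {F : Type*} [Field F] [Fintype F] {n k m : ℕ}
    (hk : 0 < k) (hkn : k ≤ n)
    (G : ℕ → Matrix (Fin k) (Fin n) F)
    (hG0 : (G 0).rank = k)
    (hGm : ∀ i, m < i → G i = 0) :
    (∀ j, dcolT G j ≤ (n - k) * (j + 1) + 1) ∧
    (∀ j, dcolT G j = (n - k) * (j + 1) + 1 →
      ∀ i ≤ j, dcolT G i = (n - k) * (i + 1) + 1) := by
  have hbound : ∀ j, dcolT G j ≤ (n - k) * (j + 1) + 1 := by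
    intro j
    induction j with
    | zero => simpa using dcolT_zero_le hk hkn G
    | succ j ih =>
      calc dcolT G (j + 1) ≤ dcolT G j + (n - k) := dcolT_succ_le hk hkn G hG0 j
        _ ≤ ((n - k) * (j + 1) + 1) + (n - k) := Nat.add_le_add_right ih _
        _ = (n - k) * (j + 1 + 1) + 1 := by ring
  have hstep : ∀ t, dcolT G (t + 1) = (n - k) * (t + 1 + 1) + 1 →
      dcolT G t = (n - k) * (t + 1) + 1 := by
    intro t ht
    have h1 := dcolT_succ_le hk hkn G hG0 t
    have h3 : (n - k) * (t + 1 + 1) + 1 = ((n - k) * (t + 1) + 1) + (n - k) := by ring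
    have h4 : (n - k) * (t + 1) + 1 ≤ dcolT G t := by
      have h5 : (n - k) * (t + 1) + 1 + (n - k) ≤ dcolT G t + (n - k) := by
        rw [← h3, ← ht]; exact h1
      exact Nat.le_of_add_le_add_right h5
    exact le_antisymm (hbound t) h4
  refine ⟨hbound, ?_⟩
  have key : ∀ s i, dcolT G (i + s) = (n - k) * (i + s + 1) + 1 →
      dcolT G i = (n - k) * (i + 1) + 1 := by
    intro s
    induction s with
    | zero => intro i h; simpa using h
    | succ s ih =>
      intro i h
      exact ih i (hstep (i + s) h)
  intro j hj i hij
  obtain ⟨s, rfl⟩ := Nat.exists_eq_add_of_le hij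
  exact key s i hj
end

section
/- Let G(D) = (g_{ij}(D)) be a k×n matrix over F[D] of rank k (over the field of rational functions F(D)), and define the matrix of highest order coefficients Ḡ ∈ F^{k×n} by Ḡ_{ij} = the coefficient of D^{ν_i} in g_{ij}(D), where ν_i = max_{1≤j≤n} deg g_{ij}(D). Then G(D) is minimal if and only if Ḡ has rank k. -/
open Polynomial Matrix

set_option synthInstance.maxHeartbeats 1000000
set_option maxHeartbeats 1600000

/-- The `i`-th row degree `ν_i = max_j deg g_{ij}(D)` of a polynomial matrix. -/
noncomputable def rowDeg {F : Type*} [Field F] {k n : ℕ}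
    (G : Matrix (Fin k) (Fin n) (Polynomial F)) (i : Fin k) : ℕ :=
  Finset.univ.sup fun j => (G i j).natDegree

/-- The overall constraint length `ν = Σ_i ν_i` of a polynomial matrix. -/
noncomputable def constraintLen {F : Type*} [Field F] {k n : ℕ}
    (G : Matrix (Fin k) (Fin n) (Polynomial F)) : ℕ :=
  ∑ i, rowDeg G i

/-- A generator matrix is minimal if its overall constraint length is minimal among all
generator matrices of the code it generates. -/
def IsMinimalGen {F : Type*} [Field F] {k n : ℕ}
    (G : Matrix (Fin k) (Fin n) (Polynomial F)) : Prop :=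
  ∀ G' : Matrix (Fin k) (Fin n) (Polynomial F),
    LinearMap.range (Matrix.vecMulLinear G') = LinearMap.range (Matrix.vecMulLinear G) →
    constraintLen G ≤ constraintLen G'

-- coefficient of product at exactly a "top" spot
lemma coeff_mul_of_le {F : Type*} [Field F] {p q : Polynomial F} {dq e : ℕ}
    (hq : q.natDegree ≤ dq) (he : p.natDegree + dq ≤ e) :
    (p * q).coeff e = p.coeff (e - dq) * q.coeff dq := by
  rcases eq_or_ne p 0 with rfl | hp
  · simp
  have hde : dq ≤ e := le_trans (Nat.le_add_left _ _) he
  rw [coeff_mul, Finset.sum_eq_single ((e - dq, dq) : ℕ × ℕ)]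
  · rintro ⟨a, b⟩ hab hne
    rw [Finset.HasAntidiagonal.mem_antidiagonal] at hab
    rcases lt_or_ge dq b with h | h
    · rw [coeff_eq_zero_of_natDegree_lt (lt_of_le_of_lt hq h), mul_zero]
    · have hblt : b < dq := by
        rcases eq_or_lt_of_le h with rfl | h'
        · exact absurd (by simp [Prod.ext_iff]; omega) hne
        · exact h'
      have : p.natDegree < a := by omega
      rw [coeff_eq_zero_of_natDegree_lt this, zero_mul]
  · intro h
    exact absurd (Finset.HasAntidiagonal.mem_antidiagonal.mpr (by omega)) h

-- rank equals number of rows iff rows linearly independent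
lemma rank_eq_card_iff_rows_indep {K : Type*} [Field K] {k n : ℕ}
    {A : Matrix (Fin k) (Fin n) K} :
    A.rank = k ↔ LinearIndependent K (fun i => A i) := by
  rw [Matrix.rank_eq_finrank_span_row, linearIndependent_iff_card_eq_finrank_span]
  simp [Set.finrank, eq_comm, Matrix.row]
  rfl

lemma natDegree_lt_of_coeff_eq_zero {F : Type*} [Field F] {p : Polynomial F} {m : ℕ}
    (h1 : p.natDegree ≤ m) (h2 : p.coeff m = 0) (h3 : 0 < m) : p.natDegree < m := by
  rcases eq_or_ne p 0 with rfl | hp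
  · simpa using h3
  rcases eq_or_lt_of_le h1 with he | h
  · exact absurd (he ▸ h2) (by simpa [he ▸ Polynomial.coeff_natDegree] using
      Polynomial.leadingCoeff_ne_zero.mpr hp)
  · exact h

lemma sum_smul_rows {R : Type*} [CommSemiring R] {k n : ℕ} (v : Fin k → R)
    (A : Matrix (Fin k) (Fin n) R) : ∑ i, v i • A i = v ᵥ* A := by
  funext j
  simp [Matrix.vecMul, dotProduct, Finset.sum_apply]

-- injectivity of vecMul over F[X] from K-independence of rows
lemma vecMul_inj_of_rows_indep {F : Type*} [Field F] {k n : ℕ}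
    {A : Matrix (Fin k) (Fin n) (Polynomial F)}
    (h : LinearIndependent (RatFunc F)
      (fun i => (A.map (algebraMap (Polynomial F) (RatFunc F))) i)) :
    ∀ u : Fin k → Polynomial F, u ᵥ* A = 0 → u = 0 := by
  intro u hu
  set f := algebraMap (Polynomial F) (RatFunc F) with hfdef
  have hsum : ∑ i, f (u i) • (A.map f) i = 0 := by
    rw [sum_smul_rows]
    funext j
    have : f ((u ᵥ* A) j) = ((f ∘ u) ᵥ* A.map f) j := RingHom.map_vecMul f A u j
    rw [hu] at this
    simpa [Function.comp_def] using this.symm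
  have key := Fintype.linearIndependent_iff.mp h (fun i => f (u i)) hsum
  funext i
  have : f (u i) = f 0 := by simpa using key i
  exact IsFractionRing.injective (Polynomial F) (RatFunc F) this

-- predictable degree property for row-reduced matrices
lemma pred_deg {F : Type*} [Field F] {k n : ℕ} {G : Matrix (Fin k) (Fin n) (Polynomial F)}
    (hGbar : LinearIndependent F
      (fun i => (Matrix.of fun i j => (G i j).coeff (rowDeg G i)) i))
    {w : Fin k → Polynomial F} {d : ℕ} (hw : ∀ j, ((w ᵥ* G) j).natDegree ≤ d) :
    ∀ i, w i ≠ 0 → (w i).natDegree + rowDeg G i ≤ d := by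
  classical
  by_contra hcon
  push_neg at hcon
  obtain ⟨i₀, hwi₀, hd⟩ := hcon
  set f : Fin k → ℕ := fun i => if w i = 0 then 0 else (w i).natDegree + rowDeg G i with hf
  set e := Finset.univ.sup f with he
  have hfi₀ : f i₀ = (w i₀).natDegree + rowDeg G i₀ := by simp [hf, hwi₀]
  have hed : d < e := lt_of_lt_of_le (hfi₀ ▸ hd) (Finset.le_sup (Finset.mem_univ i₀))
  obtain ⟨i₁, -, hi₁⟩ := Finset.exists_mem_eq_sup Finset.univ
    ⟨i₀, Finset.mem_univ i₀⟩ f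
  have hwi₁ : w i₁ ≠ 0 := by
    intro h0
    rw [← he] at hi₁
    rw [hi₁] at hed
    simp [hf, h0] at hed
  set c : Fin k → F := fun i => (w i).coeff (e - rowDeg G i) with hc
  have hfe : ∀ i, w i ≠ 0 → (w i).natDegree + rowDeg G i ≤ e := by
    intro i hi
    have := Finset.le_sup (f := f) (Finset.mem_univ i)
    simpa [hf, hi, ← he] using this
  have hzero : ∀ j, ∑ i, c i * (G i j).coeff (rowDeg G i) = 0 := by
    intro j
    have h1 : ((w ᵥ* G) j).coeff e = 0 :=
      coeff_eq_zero_of_natDegree_lt (lt_of_le_of_lt (hw j) hed)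
    have h2 : (w ᵥ* G) j = ∑ i, w i * G i j := by
      simp [Matrix.vecMul, dotProduct]
    rw [h2, finset_sum_coeff] at h1
    rw [← h1]
    refine Finset.sum_congr rfl fun i _ => ?_
    rcases eq_or_ne (w i) 0 with h0 | h0
    · simp [hc, h0]
    · exact (coeff_mul_of_le (Finset.le_sup (f := fun j => (G i j).natDegree) (Finset.mem_univ j)) (hfe i h0)).symm
  have hsum : ∑ i, c i • (Matrix.of fun i j => (G i j).coeff (rowDeg G i)) i = 0 := by
    rw [sum_smul_rows]
    funext j
    simpa [Matrix.vecMul, dotProduct] using hzero j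
  have hcz := Fintype.linearIndependent_iff.mp hGbar c hsum
  have hE : e - rowDeg G i₁ = (w i₁).natDegree := by
    rw [← he] at hi₁
    rw [hi₁]
    simp [hf, hwi₁]
  have hne : c i₁ ≠ 0 := by
    rw [hc]
    simp only [hE, Polynomial.coeff_natDegree]
    exact Polynomial.leadingCoeff_ne_zero.mpr hwi₁
  exact hne (hcz i₁)

lemma smul_vecMul_tower {F : Type*} [Field F] {k n : ℕ} (a : F) (v : Fin k → Polynomial F)
    (M : Matrix (Fin k) (Fin n) (Polynomial F)) : (a • v) ᵥ* M = a • (v ᵥ* M) := by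
  funext j
  simp [Matrix.vecMul, dotProduct, Finset.smul_sum, smul_mul_assoc]

lemma len_le {F : Type*} [Field F] {k n : ℕ}
    {G G' : Matrix (Fin k) (Fin n) (Polynomial F)}
    (hGbar : LinearIndependent F
      (fun i => (Matrix.of fun i j => (G i j).coeff (rowDeg G i)) i))
    (hGinj : ∀ u : Fin k → Polynomial F, u ᵥ* G = 0 → u = 0)
    (hG'inj : ∀ u : Fin k → Polynomial F, u ᵥ* G' = 0 → u = 0)
    (hrange : LinearMap.range (Matrix.vecMulLinear G')
      = LinearMap.range (Matrix.vecMulLinear G)) :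
    constraintLen G ≤ constraintLen G' := by
  classical
  set d := constraintLen G + constraintLen G' with hd
  have hν : ∀ i, rowDeg G i ≤ d := fun i =>
    le_trans (Finset.single_le_sum (f := rowDeg G) (fun i _ => Nat.zero_le _)
      (Finset.mem_univ i)) (Nat.le_add_right _ _)
  have hν' : ∀ i, rowDeg G' i ≤ d := fun i =>
    le_trans (Finset.single_le_sum (f := rowDeg G') (fun i _ => Nat.zero_le _)
      (Finset.mem_univ i)) (Nat.le_add_left _ _)
  -- cancellation lemmas
  have hcancel : ∀ a b : Fin k → Polynomial F, a ᵥ* G = b ᵥ* G → a = b := by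
    intro a b hab
    have := hGinj (a - b) (by rw [Matrix.sub_vecMul, hab, sub_self])
    exact sub_eq_zero.mp this
  have hcancel' : ∀ a b : Fin k → Polynomial F, a ᵥ* G' = b ᵥ* G' → a = b := by
    intro a b hab
    have := hG'inj (a - b) (by rw [Matrix.sub_vecMul, hab, sub_self])
    exact sub_eq_zero.mp this
  -- degree bound on image vectors
  have hvdeg : ∀ (u : (i : Fin k) → Polynomial.degreeLT F (d + 1 - rowDeg G' i)) (j : Fin n),
      (((fun i => (u i : Polynomial F)) ᵥ* G') j).natDegree ≤ d := by
    intro u j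
    have h2 : ((fun i => (u i : Polynomial F)) ᵥ* G') j
        = ∑ i, (u i : Polynomial F) * G' i j := by
      simp [Matrix.vecMul, dotProduct]
    rw [h2]
    refine Polynomial.natDegree_sum_le_of_forall_le _ _ fun i _ => ?_
    refine le_trans Polynomial.natDegree_mul_le ?_
    have hg : (G' i j).natDegree ≤ rowDeg G' i :=
      Finset.le_sup (f := fun j => (G' i j).natDegree) (Finset.mem_univ j)
    have hui : ((u i : Polynomial F)).natDegree + rowDeg G' i ≤ d := by
      rcases eq_or_ne ((u i : Polynomial F)) 0 with h0 | h0
      · simp [h0, hν' i]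
      · have h1 := Polynomial.mem_degreeLT.mp (u i).2
        have h2 := (Polynomial.natDegree_lt_iff_degree_lt h0).mpr h1
        have := hν' i
        omega
    omega
  -- the lift to W
  have hv : ∀ (u : (i : Fin k) → Polynomial.degreeLT F (d + 1 - rowDeg G' i)),
      ((fun i => (u i : Polynomial F)) ᵥ* G') ∈ LinearMap.range (Matrix.vecMulLinear G) := by
    intro u
    rw [← hrange]
    exact ⟨fun i => (u i : Polynomial F), Matrix.vecMulLinear_apply _ _⟩
  choose W hW using fun u => LinearMap.mem_range.mp (hv u)
  have hWv : ∀ u, W u ᵥ* G = (fun i => (u i : Polynomial F)) ᵥ* G' := by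
    intro u
    rw [← Matrix.vecMulLinear_apply]
    exact hW u
  have hWdeg : ∀ u (i : Fin k), (W u i) ∈ Polynomial.degreeLT F (d + 1 - rowDeg G i) := by
    intro u i
    rw [Polynomial.mem_degreeLT]
    have hbnd := pred_deg hGbar (w := W u) (d := d)
      (fun j => by rw [hWv u]; exact hvdeg u j)
    rcases eq_or_ne (W u i) 0 with h0 | h0
    · rw [h0, Polynomial.degree_zero]
      exact WithBot.bot_lt_coe _
    · rw [← Polynomial.natDegree_lt_iff_degree_lt h0]
      have := hbnd i h0
      have := hν i
      omega
  let φ : ((i : Fin k) → Polynomial.degreeLT F (d + 1 - rowDeg G' i)) →ₗ[F]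
      ((i : Fin k) → Polynomial.degreeLT F (d + 1 - rowDeg G i)) :=
    { toFun := fun u i => ⟨W u i, hWdeg u i⟩
      map_add' := by
        intro u u'
        have h1 : W (u + u') = W u + W u' := by
          apply hcancel
          rw [Matrix.add_vecMul, hWv, hWv, hWv, ← Matrix.add_vecMul]
          congr 1
        funext i
        exact Subtype.ext (congrFun h1 i)
      map_smul' := by
        intro a u
        have h1 : W (a • u) = a • W u := by
          apply hcancel
          rw [hWv, smul_vecMul_tower, hWv, ← smul_vecMul_tower]
          congr 1
        funext i
        exact Subtype.ext (congrFun h1 i) }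
  have hφinj : Function.Injective φ := by
    intro u u' huu
    have hWe : W u = W u' := by
      funext i
      exact congrArg Subtype.val (congrFun huu i)
    have hlift : (fun i => (u i : Polynomial F)) = fun i => (u' i : Polynomial F) := by
      apply hcancel'
      rw [← hWv, ← hWv, hWe]
    funext i
    exact Subtype.ext (congrFun hlift i)
  haveI : ∀ i : Fin k, Module.Finite F (Polynomial.degreeLT F (d + 1 - rowDeg G i)) :=
    fun i => Module.Finite.equiv (Polynomial.degreeLTEquiv F _).symm
  haveI : ∀ i : Fin k, Module.Finite F (Polynomial.degreeLT F (d + 1 - rowDeg G' i)) :=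
    fun i => Module.Finite.equiv (Polynomial.degreeLTEquiv F _).symm
  have hrk := LinearMap.finrank_le_finrank_of_injective hφinj
  rw [Module.finrank_pi_fintype, Module.finrank_pi_fintype] at hrk
  have hdeq : ∀ t : ℕ, Module.finrank F (Polynomial.degreeLT F t) = t := fun t => by
    rw [(Polynomial.degreeLTEquiv F t).finrank_eq]
    exact Module.finrank_fin_fun F
  simp only [hdeq] at hrk
  have e1 : (∑ i : Fin k, (d + 1 - rowDeg G i)) + constraintLen G = k * (d + 1) := by
    rw [constraintLen, ← Finset.sum_add_distrib,
      Finset.sum_congr rfl (fun i _ => Nat.sub_add_cancel (by have := hν i; omega))]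
    simp [mul_comm]
  have e2 : (∑ i : Fin k, (d + 1 - rowDeg G' i)) + constraintLen G' = k * (d + 1) := by
    rw [constraintLen, ← Finset.sum_add_distrib,
      Finset.sum_congr rfl (fun i _ => Nat.sub_add_cancel (by have := hν' i; omega))]
    simp [mul_comm]
  omega

lemma not_minimal {F : Type*} [Field F] {k n : ℕ}
    {G : Matrix (Fin k) (Fin n) (Polynomial F)}
    (hGinj : ∀ u : Fin k → Polynomial F, u ᵥ* G = 0 → u = 0)
    (hdep : ¬ LinearIndependent F
      (fun i => (Matrix.of fun i j => (G i j).coeff (rowDeg G i)) i)) :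
    ¬ IsMinimalGen G := by
  classical
  obtain ⟨c, hsum, i₀', hc0⟩ := Fintype.not_linearIndependent_iff.mp hdep
  have hsumj : ∀ j, ∑ i, c i * (G i j).coeff (rowDeg G i) = 0 := by
    intro j
    have := congrFun hsum j
    simpa [Finset.sum_apply, Matrix.of_apply] using this
  set s : Finset (Fin k) := Finset.univ.filter (fun i => c i ≠ 0) with hs
  have hsne : s.Nonempty := ⟨i₀', by simp [hs, hc0]⟩
  obtain ⟨i₀, hi₀s, hi₀⟩ := Finset.exists_mem_eq_sup s hsne (fun i => rowDeg G i)
  have hci₀ : c i₀ ≠ 0 := by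
    have := Finset.mem_filter.mp hi₀s
    exact this.2
  have hmax : ∀ i, c i ≠ 0 → rowDeg G i ≤ rowDeg G i₀ := by
    intro i hi
    rw [← hi₀]
    exact Finset.le_sup (by simp [hs, hi])
  rcases Nat.eq_zero_or_pos (rowDeg G i₀) with hν0 | hν0
  · -- all relevant rows constant : contradicts injectivity
    exfalso
    have hall : (fun i => Polynomial.C (c i)) ᵥ* G = 0 := by
      funext j
      have h2 : ((fun i => Polynomial.C (c i)) ᵥ* G) j = ∑ i, Polynomial.C (c i) * G i j := by
        simp [Matrix.vecMul, dotProduct]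
      rw [h2]
      have hterm : ∀ i, Polynomial.C (c i) * G i j
          = Polynomial.C (c i * (G i j).coeff (rowDeg G i)) := by
        intro i
        rcases eq_or_ne (c i) 0 with h0 | h0
        · simp [h0]
        · have hν : rowDeg G i = 0 := by
            have := hmax i h0
            omega
          have hdeg : (G i j).natDegree = 0 := by
            have h1 : (G i j).natDegree ≤ rowDeg G i :=
              Finset.le_sup (f := fun j => (G i j).natDegree) (Finset.mem_univ j)
            omega
          rw [hν]
          conv_lhs => rw [Polynomial.eq_C_of_natDegree_eq_zero hdeg]
          rw [← Polynomial.C_mul]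
      rw [Finset.sum_congr rfl (fun i _ => hterm i), ← map_sum, hsumj j, map_zero]
      simp
    have hz := hGinj _ hall
    have : Polynomial.C (c i₀') = 0 := congrFun hz i₀'
    exact hc0 (by simpa using this)
  · -- row reduction step
    set c' : Fin k → F := fun i => c i / c i₀ with hc'
    have hci' : ∀ i, c' i ≠ 0 → c i ≠ 0 := by
      intro i h hci
      exact h (by simp [hc', hci])
    have hc'i₀ : c' i₀ = 1 := div_self hci₀
    have hsumj' : ∀ j, ∑ i, c' i * (G i j).coeff (rowDeg G i) = 0 := by
      intro j
      have h1 : ∑ i, c' i * (G i j).coeff (rowDeg G i)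
          = (c i₀)⁻¹ * ∑ i, c i * (G i j).coeff (rowDeg G i) := by
        rw [Finset.mul_sum]
        exact Finset.sum_congr rfl fun i _ => by rw [hc']; ring
      rw [h1, hsumj j, mul_zero]
    set u₀ : Fin k → Polynomial F := fun i =>
      Polynomial.C (c' i) * Polynomial.X ^ (rowDeg G i₀ - rowDeg G i) with hu₀
    have hu₀i₀ : u₀ i₀ = 1 := by simp [hu₀, hc'i₀]
    set r : Fin n → Polynomial F := u₀ ᵥ* G with hr
    have hrj : ∀ j, r j = ∑ i, Polynomial.C (c' i)
        * Polynomial.X ^ (rowDeg G i₀ - rowDeg G i) * G i j := by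
      intro j
      simp [hr, hu₀, Matrix.vecMul, dotProduct]
    have hrdeg : ∀ j, (r j).natDegree < rowDeg G i₀ := by
      intro j
      have hle : (r j).natDegree ≤ rowDeg G i₀ := by
        rw [hrj]
        refine Polynomial.natDegree_sum_le_of_forall_le _ _ fun i _ => ?_
        rcases eq_or_ne (c' i) 0 with h0 | h0
        · simp [h0]
        · have h1 := hmax i (hci' i h0)
          have hg : (G i j).natDegree ≤ rowDeg G i :=
            Finset.le_sup (f := fun j => (G i j).natDegree) (Finset.mem_univ j)
          have hCX : (Polynomial.C (c' i)
              * Polynomial.X ^ (rowDeg G i₀ - rowDeg G i)).natDegree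
              ≤ rowDeg G i₀ - rowDeg G i :=
            le_trans Polynomial.natDegree_mul_le (by simp)
          refine le_trans Polynomial.natDegree_mul_le (le_trans (add_le_add hCX hg) ?_)
          omega
      have hcoeff : (r j).coeff (rowDeg G i₀) = 0 := by
        rw [hrj, finset_sum_coeff]
        have hterm : ∀ i, (Polynomial.C (c' i)
            * Polynomial.X ^ (rowDeg G i₀ - rowDeg G i) * G i j).coeff (rowDeg G i₀)
            = c' i * (G i j).coeff (rowDeg G i) := by
          intro i
          rcases eq_or_ne (c' i) 0 with h0 | h0
          · simp [h0]
          · have h1 := hmax i (hci' i h0)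
            have hre : Polynomial.C (c' i)
                * Polynomial.X ^ (rowDeg G i₀ - rowDeg G i) * G i j
                = Polynomial.C (c' i)
                * (G i j * Polynomial.X ^ (rowDeg G i₀ - rowDeg G i)) := by ring
            rw [hre, Polynomial.coeff_C_mul, Polynomial.coeff_mul_X_pow',
              if_pos (by omega : rowDeg G i₀ - rowDeg G i ≤ rowDeg G i₀)]
            have : rowDeg G i₀ - (rowDeg G i₀ - rowDeg G i) = rowDeg G i := by omega
            rw [this]
        rw [Finset.sum_congr rfl fun i _ => hterm i]
        exact hsumj' j
      exact natDegree_lt_of_coeff_eq_zero hle hcoeff hν0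
    set G'' := Matrix.updateRow G i₀ r with hG''
    have hsub1 : LinearMap.range (Matrix.vecMulLinear G'')
        ≤ LinearMap.range (Matrix.vecMulLinear G) := by
      rw [range_vecMulLinear G'', Submodule.span_le]
      rintro x ⟨i, rfl⟩
      show G'' i ∈ LinearMap.range (Matrix.vecMulLinear G)
      rcases eq_or_ne i i₀ with heq | hne
      · rw [heq]
        refine ⟨u₀, ?_⟩
        rw [Matrix.vecMulLinear_apply]
        rw [hG'', Matrix.updateRow_self, hr]
      · refine ⟨Pi.single i 1, ?_⟩
        rw [Matrix.vecMulLinear_apply, Matrix.single_vecMul]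
        funext j
        rw [hG'', Matrix.row, Matrix.updateRow_ne hne, one_smul]
    have hsub2 : LinearMap.range (Matrix.vecMulLinear G)
        ≤ LinearMap.range (Matrix.vecMulLinear G'') := by
      rw [range_vecMulLinear G, Submodule.span_le]
      rintro x ⟨i, rfl⟩
      show G i ∈ LinearMap.range (Matrix.vecMulLinear G'')
      rcases eq_or_ne i i₀ with heq | hne
      · rw [heq]
        refine ⟨fun i => if i = i₀ then 1 else -u₀ i, ?_⟩
        rw [Matrix.vecMulLinear_apply]
        funext j
        have hL : ((fun i => if i = i₀ then (1 : Polynomial F) else -u₀ i) ᵥ* G'') j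
            = ∑ i, (if i = i₀ then 1 else -u₀ i) * G'' i j := by
          simp [Matrix.vecMul, dotProduct]
        rw [hL, ← Finset.add_sum_erase _ _ (Finset.mem_univ i₀)]
        have hR : r j = ∑ i, u₀ i * G i j := by
          simp [hr, Matrix.vecMul, dotProduct]
        have hR2 : r j = G i₀ j + ∑ i ∈ Finset.univ.erase i₀, u₀ i * G i j := by
          rw [hR, ← Finset.add_sum_erase _ _ (Finset.mem_univ i₀), hu₀i₀, one_mul]
        have hrest : ∑ i ∈ Finset.univ.erase i₀, (if i = i₀ then (1:Polynomial F) else -u₀ i) * G'' i j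
            = -∑ i ∈ Finset.univ.erase i₀, u₀ i * G i j := by
          rw [← Finset.sum_neg_distrib]
          refine Finset.sum_congr rfl fun i hi => ?_
          have hne' : i ≠ i₀ := Finset.ne_of_mem_erase hi
          rw [if_neg hne', hG'', Matrix.updateRow_ne hne', neg_mul]
        rw [hrest, if_pos rfl, one_mul, hG'', Matrix.updateRow_self, hR2]
        ring
      · refine ⟨Pi.single i 1, ?_⟩
        rw [Matrix.vecMulLinear_apply, Matrix.single_vecMul]
        funext j
        rw [hG'', Matrix.row, Matrix.updateRow_ne hne, one_smul]
    have hrangeeq : LinearMap.range (Matrix.vecMulLinear G'')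
        = LinearMap.range (Matrix.vecMulLinear G) := le_antisymm hsub1 hsub2
    have hstrict : rowDeg G'' i₀ < rowDeg G i₀ := by
      rw [rowDeg]
      refine (Finset.sup_lt_iff (show ⊥ < rowDeg G i₀ from hν0)).mpr fun j _ => ?_
      rw [hG'', Matrix.updateRow_self]
      exact hrdeg j
    have hlen : constraintLen G'' < constraintLen G := by
      rw [constraintLen, constraintLen]
      refine Finset.sum_lt_sum (fun i _ => ?_) ⟨i₀, Finset.mem_univ i₀, hstrict⟩
      rcases eq_or_ne i i₀ with heq | hne
      · rw [heq]; exact le_of_lt hstrict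
      · have : G'' i = G i := Matrix.updateRow_ne hne
        exact le_of_eq (by rw [rowDeg, rowDeg, this])
    intro hmin
    exact absurd (hmin G'' hrangeeq) (not_le.mpr hlen)

/-- A full-rank polynomial matrix `G(D)` is minimal iff its matrix of highest order
coefficients `Ḡ`, with `Ḡ_{ij} = coeff_{D^{ν_i}} g_{ij}(D)`, has rank `k`. -/
theorem minimal_iff_highest_coeff_full_rank {F : Type*} [Field F] [Fintype F] {k n : ℕ}
    (hk : 0 < k) (hkn : k ≤ n)
    (G : Matrix (Fin k) (Fin n) (Polynomial F))
    (hrank : (G.map (algebraMap (Polynomial F) (RatFunc F))).rank = k) :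
    IsMinimalGen G ↔ (Matrix.of fun i j => (G i j).coeff (rowDeg G i)).rank = k := by
  have hGrows : LinearIndependent (RatFunc F)
      (fun i => (G.map (algebraMap (Polynomial F) (RatFunc F))) i) :=
    rank_eq_card_iff_rows_indep.mp hrank
  have hGinj := vecMul_inj_of_rows_indep hGrows
  constructor
  · intro hmin
    by_contra hG
    have hdep : ¬ LinearIndependent F
        (fun i => (Matrix.of fun i j => (G i j).coeff (rowDeg G i)) i) :=
      fun h => hG (rank_eq_card_iff_rows_indep.mpr h)
    exact not_minimal hGinj hdep hmin
  · intro hGbarrank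
    have hGbar := rank_eq_card_iff_rows_indep.mp hGbarrank
    intro G' hrange
    have hspan : Submodule.span (RatFunc F)
        (Set.range (G.map (algebraMap (Polynomial F) (RatFunc F))))
        ≤ Submodule.span (RatFunc F)
        (Set.range (G'.map (algebraMap (Polynomial F) (RatFunc F)))) := by
      rw [Submodule.span_le]
      rintro x ⟨i, rfl⟩
      have hGi : G i ∈ LinearMap.range (Matrix.vecMulLinear G') := by
        rw [hrange]
        refine ⟨Pi.single i 1, ?_⟩
        rw [Matrix.vecMulLinear_apply, Matrix.single_vecMul]
        funext j
        rw [Matrix.row, one_smul]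
      obtain ⟨u, hu⟩ := hGi
      rw [Matrix.vecMulLinear_apply] at hu
      have hmap : (G.map (algebraMap (Polynomial F) (RatFunc F))) i
          = ((algebraMap (Polynomial F) (RatFunc F)) ∘ u)
            ᵥ* (G'.map (algebraMap (Polynomial F) (RatFunc F))) := by
        funext j
        have h1 := RingHom.map_vecMul (algebraMap (Polynomial F) (RatFunc F)) G' u j
        rw [hu] at h1
        exact h1
      rw [SetLike.mem_coe, hmap, ← sum_smul_rows]
      exact Submodule.sum_mem _ fun i _ =>
        Submodule.smul_mem _ _ (Submodule.subset_span ⟨_, rfl⟩)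
    have hG'rows : LinearIndependent (RatFunc F)
        (fun i => (G'.map (algebraMap (Polynomial F) (RatFunc F))) i) := by
      rw [linearIndependent_iff_card_eq_finrank_span]
      haveI : FiniteDimensional (RatFunc F) (Submodule.span (RatFunc F)
          (Set.range (G'.map (algebraMap (Polynomial F) (RatFunc F))))) :=
        FiniteDimensional.span_of_finite _ (Set.finite_range _)
      have h1 : Module.finrank (RatFunc F) (Submodule.span (RatFunc F)
          (Set.range (G.map (algebraMap (Polynomial F) (RatFunc F))))) = k := by
        refine (Matrix.rank_eq_finrank_span_row _).symm.trans ?_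
        exact hrank
      have h2 := Submodule.finrank_mono hspan
      have h3 : Set.finrank (RatFunc F)
          (Set.range fun i => (G'.map (algebraMap (Polynomial F) (RatFunc F))) i)
          ≤ Fintype.card (Fin k) :=
        finrank_range_le_card _
      rw [Set.finrank] at h3 ⊢
      rw [h1] at h2
      simp only [Fintype.card_fin] at h3 ⊢
      have he : (Set.range fun i => (G'.map (algebraMap (Polynomial F) (RatFunc F))) i)
          = Set.range (G'.map (algebraMap (Polynomial F) (RatFunc F))) := rfl
      rw [he] at h3 ⊢
      omega
    have hG'inj := vecMul_inj_of_rows_indep hG'rows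
    exact len_le hGbar hGinj hG'inj hrange
end

section
/- Let q be a prime power, t ≥ 1, a ∈ F_{q^t}, and f = (f_0, ..., f_d) ∈ F_{q^t}^{d+1}. Then the map D_{f,a} : F_{q^t} → F_{q^t} defined by D_{f,a}(β) = Σ_{i=0}^d f_i N_i(β^{q-1} a) β is F_q-linear: for all λ_1, λ_2 ∈ F_q and β_1, β_2 ∈ F_{q^t}, D_{f,a}(λ_1 β_1 + λ_2 β_2) = λ_1 D_{f,a}(β_1) + λ_2 D_{f,a}(β_2). -/
/-- `N_0(a) = 1`, `N_{i+1}(a) = N_i(a)^q · a` (the skew "norm" sequence, with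
`σ(x) = x^q` the Frobenius). -/
def skewN (q : ℕ) {F : Type*} [Field F] : ℕ → F → F
  | 0, _ => 1
  | i + 1, a => (skewN q i a) ^ q * a

/-- `D_{f,a}(β) = Σ_i f_i N_i(β^{q-1} a) β`, the linearized evaluation of the skew
polynomial with coefficients `f` at the `β`-conjugate of `a`, multiplied by `β`. -/
def Dmap (q : ℕ) {F : Type*} [Field F] {d : ℕ} (f : Fin d → F) (a β : F) : F :=
  ∑ i, f i * skewN q (i : ℕ) (β ^ (q - 1) * a) * β

lemma skewN_conj (q : ℕ) (hq : 1 ≤ q) {F : Type*} [Field F] (i : ℕ) (a β : F) :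
    skewN q i (β ^ (q - 1) * a) * β = β ^ (q ^ i) * skewN q i a := by
  induction i with
  | zero => simp [skewN]
  | succ i ih =>
    have hβ : β ^ (q - 1) * β = β ^ q := by
      rw [← pow_succ, Nat.sub_add_cancel hq]
    calc skewN q (i+1) (β ^ (q-1) * a) * β
        = skewN q i (β ^ (q-1) * a) ^ q * β ^ q * a := by
          rw [skewN, ← hβ]; ring
      _ = (β ^ q ^ i * skewN q i a) ^ q * a := by rw [← mul_pow, ih]
      _ = β ^ q ^ (i+1) * skewN q (i+1) a := by
          rw [skewN, mul_pow, ← pow_mul, ← pow_succ]; ring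

/-- The map `D_{f,a}` is `F_q`-linear (here `λ ∈ F_q` is characterized by `λ^q = λ`). -/
theorem Dmap_Fq_linear (q t d : ℕ) (hq : IsPrimePow q) (ht : 1 ≤ t)
    (F : Type*) [Field F] [Fintype F] (hF : Fintype.card F = q ^ t)
    (a : F) (f : Fin (d + 1) → F) :
    ∀ l₁ l₂ : F, l₁ ^ q = l₁ → l₂ ^ q = l₂ → ∀ β₁ β₂ : F,
      Dmap q f a (l₁ * β₁ + l₂ * β₂) = l₁ * Dmap q f a β₁ + l₂ * Dmap q f a β₂ := by
  intro l₁ l₂ h₁ h₂ β₁ β₂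
  obtain ⟨p, k, hp, hk, hpk⟩ := hq
  have hq1 : 1 ≤ q := by
    rw [← hpk]; exact Nat.one_le_pow _ _ hp.nat_prime.pos
  haveI : CharP F (ringChar F) := ringChar.charP F
  have hprime : (ringChar F).Prime := CharP.char_is_prime F (ringChar F)
  have hcast : ((q ^ t : ℕ) : F) = 0 := by
    rw [← hF]; exact FiniteField.cast_card_eq_zero F
  have hdvd : ringChar F ∣ q ^ t := (CharP.cast_eq_zero_iff F (ringChar F) _).mp hcast
  have hdp : ringChar F ∣ p := by
    have h : ringChar F ∣ p ^ (k * t) := by rwa [pow_mul, hpk]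
    exact hprime.dvd_of_dvd_pow h
  have hpc : ringChar F = p := (Nat.prime_dvd_prime_iff_eq hprime hp.nat_prime).mp hdp
  haveI : Fact (ringChar F).Prime := ⟨hprime⟩
  have hfrob : ∀ (x y : F) (i : ℕ), (x + y) ^ q ^ i = x ^ q ^ i + y ^ q ^ i := by
    intro x y i
    have h : q ^ i = (ringChar F) ^ (k * i) := by rw [hpc, pow_mul, hpk]
    rw [h]
    exact add_pow_char_pow x y (ringChar F) (k*i)
  have hfix : ∀ (l : F), l ^ q = l → ∀ i : ℕ, l ^ q ^ i = l := by
    intro l hl i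
    induction i with
    | zero => simp
    | succ i ih => rw [pow_succ, pow_mul, ih, hl]
  have key : ∀ β : F, Dmap q f a β = ∑ i : Fin (d+1), f i * skewN q (i : ℕ) a * β ^ q ^ (i : ℕ) := by
    intro β
    unfold Dmap
    refine Finset.sum_congr rfl fun i _ => ?_
    rw [mul_assoc, skewN_conj q hq1 _ a β]; ring
  rw [key, key, key, Finset.mul_sum, Finset.mul_sum, ← Finset.sum_add_distrib]
  refine Finset.sum_congr rfl fun i _ => ?_
  rw [hfrob (l₁*β₁) (l₂*β₂) (i : ℕ), mul_pow, mul_pow, hfix l₁ h₁ (i : ℕ), hfix l₂ h₂ (i : ℕ)]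
  ring
end

section
/- Let q be a prime power, t ≥ 1, and f = (f_0, ..., f_d) ∈ F_{q^t}^{d+1} nonzero with f_d ≠ 0. Let a_1, ..., a_r ∈ F_{q^t}^* be pairwise non-conjugate (there is no β ∈ F_{q^t}^* with a_j = β^{q-1} a_i for i ≠ j). Then ε + Σ_{i=1}^r dim_{F_q} { β ∈ F_{q^t} : D_{f,a_i}(β) = 0 } ≤ d, where ε = 1 if f_0 = 0 and ε = 0 otherwise. -/
section Aux
variable {F : Type*} [Field F] {q : ℕ}

lemma skewN_mul (i : ℕ) (x y : F) : skewN q i (x * y) = skewN q i x * skewN q i y := by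
  induction i with
  | zero => simp [skewN]
  | succ n ih => simp only [skewN, ih, mul_pow]; ring

lemma skewN_pow_qsub (hq : 0 < q) (i : ℕ) (β : F) :
    skewN q i (β ^ (q - 1)) = β ^ (q ^ i - 1) := by
  induction i with
  | zero => simp [skewN]
  | succ n ih =>
    have h1 : 1 ≤ q ^ n := Nat.one_le_pow _ _ hq
    rw [skewN, ih, ← pow_mul, ← pow_add]
    congr 1
    have h2 : q ^ n * q = q ^ (n + 1) := by rw [pow_succ]
    have h3 : q ≤ q ^ n * q := Nat.le_mul_of_pos_left _ h1
    rw [Nat.sub_mul, one_mul]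
    omega

lemma skewN_qpow (k : ℕ) (a : F) :
    skewN q k a * a ^ (q ^ k) = (skewN q k a) ^ q * a := by
  induction k with
  | zero => simp [skewN]
  | succ n ih =>
    have h : (skewN q n a * a ^ q ^ n) ^ q = ((skewN q n a) ^ q * a) ^ q := by rw [ih]
    rw [mul_pow, mul_pow, ← pow_mul, ← pow_mul, ← pow_succ] at h
    rw [skewN, mul_pow, ← pow_mul]
    calc skewN q n a ^ q * a * a ^ q ^ (n + 1)
        = skewN q n a ^ q * a ^ q ^ (n + 1) * a := by ring
      _ = skewN q n a ^ (q * q) * a ^ q * a := by rw [h]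

/-- linearized polynomial form -/
def Lnat (q : ℕ) (n : ℕ) (f : ℕ → F) (a β : F) : F :=
  ∑ j ∈ Finset.range n, f j * skewN q j a * β ^ (q ^ j)

lemma Lnat_zero (hq : 0 < q) (n : ℕ) (f : ℕ → F) (a : F) : Lnat q n f a 0 = 0 := by
  unfold Lnat
  apply Finset.sum_eq_zero
  intro j _
  rw [zero_pow (by positivity), mul_zero]

lemma Dmap_eq_Lnat (hq : 0 < q) {d : ℕ} (f : Fin (d+1) → F) (a β : F) :
    Dmap q f a β = Lnat q (d+1) (fun j => if h : j < d + 1 then f ⟨j, h⟩ else 0) a β := by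
  unfold Dmap Lnat
  rw [← Fin.sum_univ_eq_sum_range]
  apply Finset.sum_congr rfl
  intro i _
  have hlt : (i : ℕ) < d + 1 := i.isLt
  simp only [hlt, dif_pos, Fin.eta]
  rw [skewN_mul, skewN_pow_qsub hq]
  have : (β:F) ^ (q ^ (i:ℕ) - 1) * β = β ^ (q ^ (i:ℕ)) := by
    rw [← pow_succ]
    congr 1
    have := Nat.one_le_pow (i:ℕ) q hq
    omega
  rw [← this]; ring


end Aux
section CharAux
variable {F : Type*} [Field F] {q p m : ℕ} [hp : Fact p.Prime] [CharP F p]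

lemma sub_pow_q (hqpm : q = p ^ m) (x y : F) : (x - y) ^ q = x ^ q - y ^ q := by
  rw [hqpm]; exact sub_pow_char_pow x y m

lemma sum_pow_q (hqpm : q = p ^ m) {ι : Type*} (s : Finset ι) (f : ι → F) :
    (∑ i ∈ s, f i) ^ q = ∑ i ∈ s, (f i) ^ q := by
  rw [hqpm]; exact sum_pow_char_pow p m s f

lemma skewN_M_pow (hqpm : q = p ^ m) (k : ℕ) (a c β : F) :
    skewN q k a * (a * β ^ q - c * β) ^ q ^ k
      = skewN q (k + 1) a * β ^ q ^ (k + 1) - skewN q k a * c ^ q ^ k * β ^ q ^ k := by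
  have hqk : (q : ℕ) ^ k = p ^ (m * k) := by rw [hqpm, ← pow_mul]
  rw [hqk, sub_pow_char_pow, ← hqk, mul_pow, mul_pow, ← pow_mul]
  have h1 : q * q ^ k = q ^ (k + 1) := (pow_succ' q k).symm
  rw [h1]
  have h3 := skewN_qpow (q := q) k a
  have : skewN q k a * (a ^ q ^ k * β ^ q ^ (k+1)) = skewN q (k+1) a * β ^ q ^ (k+1) := by
    rw [skewN, ← h3]; ring
  rw [mul_sub, this]; ring

lemma div_identity (hqpm : q = p ^ m) (d : ℕ) (f g : ℕ → F) (c : F)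
    (htop : g d = f (d + 1))
    (hrec : ∀ j, 1 ≤ j → j ≤ d → f j = g (j - 1) - g j * c ^ q ^ j)
    (a β : F) :
    Lnat q (d + 2) f a β
      = Lnat q (d + 1) g a (a * β ^ q - c * β) + (f 0 + g 0 * c) * β := by
  set g' : ℕ → F := fun k => if k ≤ d then g k else 0 with hg'
  set u : ℕ → F := fun j => g' j * skewN q j a * c ^ q ^ j * β ^ q ^ j with hu
  set w : ℕ → F := fun k => g' k * skewN q (k + 1) a * β ^ q ^ (k + 1) with hw
  have hrec' : ∀ k, k ≤ d → f (k + 1) = g' k - g' (k + 1) * c ^ q ^ (k + 1) := by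
    intro k hk
    rcases Nat.lt_or_ge k d with hkd | hkd
    · have := hrec (k + 1) (by omega) (by omega)
      simpa [hg', hk, Nat.succ_le_of_lt hkd] using this
    · have hkd' : k = d := by omega
      subst hkd'
      simp [hg', htop.symm]
  unfold Lnat
  rw [Finset.sum_range_succ']
  have lhs_eq : ∀ k ∈ Finset.range (d + 1),
      f (k + 1) * skewN q (k + 1) a * β ^ q ^ (k + 1) = w k - u (k + 1) := by
    intro k hk
    rw [Finset.mem_range] at hk
    rw [hrec' k (by omega)]
    simp only [hw, hu]
    ring
  have rhs_eq : ∀ k ∈ Finset.range (d + 1),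
      g k * skewN q k a * (a * β ^ q - c * β) ^ q ^ k = w k - u k := by
    intro k hk
    rw [Finset.mem_range] at hk
    have hgk : g' k = g k := by simp [hg', Nat.lt_succ_iff.mp hk]
    rw [mul_assoc, skewN_M_pow hqpm]
    simp only [hw, hu, hgk]
    ring
  conv_lhs => rw [Finset.sum_congr rfl lhs_eq]
  conv_rhs => rw [Finset.sum_congr rfl rhs_eq]
  have tele : (∑ k ∈ Finset.range (d + 1), (u k - u (k + 1))) = u 0 - u (d + 1) :=
    Finset.sum_range_sub' u (d + 1)
  rw [Finset.sum_sub_distrib, Finset.sum_sub_distrib] at *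
  have hu0 : u 0 = g' 0 * c * β := by simp [hu, skewN]
  have hud : u (d + 1) = 0 := by simp [hg', hu]
  have hg0 : g' 0 = g 0 := by simp [hg']
  rw [hu0, hud, hg0] at tele
  simp only [skewN, pow_zero, pow_one]
  linear_combination tele

lemma shift_identity (hqpm : q = p ^ m) (d : ℕ) (f h : ℕ → F)
    (hsh : ∀ k, h k ^ q = f (k + 1)) (h0 : f 0 = 0) (a β : F) :
    Lnat q (d + 2) f a β = a * (Lnat q (d + 1) h a β) ^ q := by
  unfold Lnat
  rw [sum_pow_q hqpm, Finset.mul_sum, Finset.sum_range_succ']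
  have : ∀ k ∈ Finset.range (d + 1),
      f (k + 1) * skewN q (k + 1) a * β ^ q ^ (k + 1)
        = a * (h k * skewN q k a * β ^ q ^ k) ^ q := by
    intro k hk
    rw [mul_pow, mul_pow, ← pow_mul, ← hsh k]
    have h2 : q ^ k * q = q ^ (k + 1) := (pow_succ q k).symm
    rw [h2, skewN]
    ring
  rw [Finset.sum_congr rfl this]
  simp [h0]
end CharAux
section Count
open Finset Polynomial
variable {F : Type*} [Field F] [Fintype F] [DecidableEq F]

lemma card_preimage_le {M : F → F} (hM : ∀ x y : F, M (x - y) = M x - M y)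
    (P : F → Prop) [DecidablePred P] (n : ℕ)
    (hker : (Finset.univ.filter fun x => M x = 0).card ≤ n) :
    (Finset.univ.filter fun x => P (M x)).card ≤ (Finset.univ.filter P).card * n := by
  classical
  set s := Finset.univ.filter fun x => P (M x) with hs
  have h := Finset.card_le_mul_card_image (s := s) (f := M) n ?_
  · refine h.trans ?_
    rw [mul_comm]
    apply Nat.mul_le_mul_right
    apply Finset.card_le_card
    intro b hb
    rcases Finset.mem_image.mp hb with ⟨x, hx, rfl⟩
    simp only [hs, Finset.mem_filter] at hx ⊢
    exact ⟨Finset.mem_univ _, hx.2⟩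
  · intro b hb
    rcases Finset.mem_image.mp hb with ⟨x0, hx0, hMx0⟩
    calc (s.filter fun x => M x = b).card
        ≤ (Finset.univ.filter fun x => M x = 0).card := by
          apply Finset.card_le_card_of_injOn (fun x => x - x0)
          · intro x hx
            have hx' := Finset.mem_filter.mp (Finset.mem_coe.mp hx)
            refine Finset.mem_coe.mpr (Finset.mem_filter.mpr ⟨Finset.mem_univ _, ?_⟩)
            rw [hM, hx'.2, hMx0, sub_self]
          · intro x _ y _ hxy
            simpa using sub_left_inj.mp hxy
      _ ≤ n := hker

lemma card_ker_M_le (q : ℕ) (hq2 : 2 ≤ q) {a c : F} (ha : a ≠ 0) :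
    (Finset.univ.filter fun β : F => a * β ^ q - c * β = 0).card ≤ q := by
  classical
  set pp : Polynomial F := Polynomial.C a * Polynomial.X ^ q - Polynomial.C c * Polynomial.X
    with hppdef
  have hcoeff : pp.coeff q = a := by
    simp only [hppdef, Polynomial.coeff_sub, Polynomial.coeff_C_mul, Polynomial.coeff_X_pow,
      Polynomial.coeff_X]
    rw [if_pos trivial, if_neg (by omega : ¬ 1 = q)]
    ring
  have hpp : pp ≠ 0 := fun h => ha (by rw [← hcoeff, h, Polynomial.coeff_zero])
  have hsub : (Finset.univ.filter fun β : F => a * β ^ q - c * β = 0) ⊆ pp.roots.toFinset := by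
    intro β hb
    simp only [Finset.mem_filter] at hb
    rw [Multiset.mem_toFinset, Polynomial.mem_roots hpp]
    simp [hppdef, Polynomial.IsRoot, hb.2]
  calc (Finset.univ.filter fun β : F => a * β ^ q - c * β = 0).card
      ≤ pp.roots.toFinset.card := Finset.card_le_card hsub
    _ ≤ Multiset.card pp.roots := pp.roots.toFinset_card_le
    _ ≤ pp.natDegree := pp.card_roots'
    _ ≤ q := by
      refine le_trans (Polynomial.natDegree_sub_le _ _) ?_
      apply max_le
      · exact le_trans (Polynomial.natDegree_C_mul_le _ _) (by simp)
      · exact le_trans (Polynomial.natDegree_C_mul_le _ _) (by simp [Polynomial.natDegree_X]; omega)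

end Count
/-- Auxiliary coefficients of the right-division of `f` by `(x - c)`. -/
def Gaux {F : Type*} [Field F] (q : ℕ) (f : ℕ → F) (c : F) (d : ℕ) : ℕ → F
  | 0 => f (d + 1)
  | k + 1 => f (d - k) + Gaux q f c d k * c ^ q ^ (d - k)

lemma key_lemma {q p m : ℕ} [hp : Fact p.Prime] (hm : 0 < m) (hqpm : q = p ^ m)
    {F : Type*} [Field F] [Fintype F] [DecidableEq F] [CharP F p] :
    ∀ d (f : ℕ → F), f d ≠ 0 →
      ∀ {r : ℕ} (a : Fin r → F), (∀ i, a i ≠ 0) →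
      (∀ i j : Fin r, i ≠ j → ∀ β : F, β ≠ 0 → a j ≠ β ^ (q - 1) * a i) →
      (if f 0 = 0 then q else 1) *
        ∏ i, (Finset.univ.filter fun β => Lnat q (d + 1) f (a i) β = 0).card ≤ q ^ d := by
  have hq2 : 2 ≤ q := by
    have : 1 < p ^ m := Nat.one_lt_pow (by omega) hp.out.one_lt
    omega
  have hq0 : 0 < q := by omega
  intro d
  induction d with
  | zero =>
    intro f hf r a ha hconj
    rw [if_neg hf, one_mul]
    have hsing : ∀ i, (Finset.univ.filter fun β : F => Lnat q 1 f (a i) β = 0) = {0} := by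
      intro i
      ext β
      simp only [Finset.mem_filter, Finset.mem_univ, true_and, Finset.mem_singleton]
      unfold Lnat
      rw [Finset.sum_range_one]
      simp only [skewN, pow_zero, pow_one, mul_one, one_mul]
      constructor
      · intro h
        rcases mul_eq_zero.mp h with h | h
        · exact absurd h hf
        · exact h
      · rintro rfl; exact mul_zero _
    calc (∏ i, (Finset.univ.filter fun β : F => Lnat q 1 f (a i) β = 0).card)
        = ∏ _i : Fin r, 1 := by
          apply Finset.prod_congr rfl
          intro i _
          rw [hsing i, Finset.card_singleton]
      _ ≤ 1 := by simp
      _ ≤ q ^ 0 := by simp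
  | succ d ih =>
    intro f hf r a ha hconj
    by_cases h0 : f 0 = 0
    · -- `f = (shift) ∘ x`: pass to q-th roots of shifted coefficients
      have hinj : Function.Injective (fun x : F => x ^ q) := by
        intro x y hxy
        have hxy' : (x - y) ^ q = 0 := by
          rw [sub_pow_q hqpm, sub_eq_zero]
          exact hxy
        have := pow_eq_zero_iff (by omega : q ≠ 0) |>.mp hxy'
        exact sub_eq_zero.mp this
      have hsurj : Function.Surjective (fun x : F => x ^ q) :=
        Finite.surjective_of_injective hinj
      set h : ℕ → F := fun k => Function.surjInv hsurj (f (k + 1)) with hh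
      have hsh : ∀ k, h k ^ q = f (k + 1) := fun k => Function.surjInv_eq hsurj _
      have hker : ∀ i β, (Lnat q (d + 2) f (a i) β = 0) ↔ (Lnat q (d + 1) h (a i) β = 0) := by
        intro i β
        rw [shift_identity hqpm d f h hsh h0]
        constructor
        · intro hz
          rcases mul_eq_zero.mp hz with hz | hz
          · exact absurd hz (ha i)
          · exact pow_eq_zero_iff (by omega : q ≠ 0) |>.mp hz
        · intro hz
          rw [hz, zero_pow (by omega : q ≠ 0), mul_zero]
      have htop : h d ≠ 0 := by
        intro hz
        apply hf
        rw [← hsh d, hz, zero_pow (by omega : q ≠ 0)]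
      have IH := ih h htop a ha hconj
      have hprod : (∏ i, (Finset.univ.filter fun β : F => Lnat q (d + 2) f (a i) β = 0).card)
          = ∏ i, (Finset.univ.filter fun β : F => Lnat q (d + 1) h (a i) β = 0).card := by
        apply Finset.prod_congr rfl
        intro i _
        congr 1
        apply Finset.filter_congr
        intro β _
        exact hker i β
      rw [if_pos h0, hprod]
      have hX : (∏ i, (Finset.univ.filter fun β : F => Lnat q (d + 1) h (a i) β = 0).card)
          ≤ q ^ d := by
        refine le_trans ?_ IH
        apply Nat.le_mul_of_pos_left
        split <;> omega
      calc q * ∏ i, (Finset.univ.filter fun β : F => Lnat q (d + 1) h (a i) β = 0).card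
          ≤ q * q ^ d := Nat.mul_le_mul_left q hX
        _ = q ^ (d + 1) := (pow_succ' q d).symm
    · rw [if_neg h0, one_mul]
      by_cases hbig : ∃ i0, 2 ≤ (Finset.univ.filter fun β : F => Lnat q (d + 2) f (a i0) β = 0).card
      · obtain ⟨i0, hi0⟩ := hbig
        obtain ⟨β0, hβ0mem, hβ0ne⟩ :=
          Finset.exists_mem_ne
            (s := Finset.univ.filter fun β : F => Lnat q (d + 2) f (a i0) β = 0)
            (by omega) (0 : F)
        rw [Finset.mem_filter] at hβ0mem
        have hβ0 : Lnat q (d + 2) f (a i0) β0 = 0 := hβ0mem.2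
        set c : F := β0 ^ (q - 1) * a i0 with hc
        have hcne : c ≠ 0 := mul_ne_zero (pow_ne_zero _ hβ0ne) (ha i0)
        set g : ℕ → F := fun k => Gaux q f c d (d - k) with hg
        have htop : g d = f (d + 1) := by
          rw [hg]
          show Gaux q f c d (d - d) = f (d + 1)
          rw [Nat.sub_self]
          rfl
        have hrec : ∀ j, 1 ≤ j → j ≤ d → f j = g (j - 1) - g j * c ^ q ^ j := by
          intro j h1 h2
          have e1 : d - (j - 1) = (d - j) + 1 := by omega
          have e2 : d - (d - j) = j := by omega
          have hgj : g (j - 1) = f j + g j * c ^ q ^ j := by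
            rw [hg]
            show Gaux q f c d (d - (j - 1)) = f j + Gaux q f c d (d - j) * c ^ q ^ j
            rw [e1]
            show f (d - (d - j)) + Gaux q f c d (d - j) * c ^ q ^ (d - (d - j))
              = f j + Gaux q f c d (d - j) * c ^ q ^ j
            rw [e2]
          rw [hgj]; ring
        have hident := div_identity hqpm d f g c htop hrec
        -- the remainder vanishes
        have hM0 : a i0 * β0 ^ q - c * β0 = 0 := by
          rw [hc]
          have : β0 ^ (q - 1) * β0 = β0 ^ q := by
            rw [← pow_succ]
            congr 1
            omega
          calc a i0 * β0 ^ q - β0 ^ (q - 1) * a i0 * β0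
              = a i0 * β0 ^ q - a i0 * (β0 ^ (q - 1) * β0) := by ring
            _ = 0 := by rw [this, sub_self]
        have hrzero : f 0 + g 0 * c = 0 := by
          have hid := hident (a i0) β0
          rw [hM0, Lnat_zero hq0, zero_add, hβ0] at hid
          rcases mul_eq_zero.mp hid.symm with hz | hz
          · exact hz
          · exact absurd hz hβ0ne
        have hident' : ∀ a' β : F,
            Lnat q (d + 2) f a' β = Lnat q (d + 1) g a' (a' * β ^ q - c * β) := by
          intro a' β
          rw [hident a' β, hrzero, zero_mul, add_zero]
        have hg0 : g 0 ≠ 0 := by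
          intro hz
          apply h0
          have := hrzero
          rw [hz, zero_mul, add_zero] at this
          exact this
        have hgtop : g d ≠ 0 := by rw [htop]; exact hf
        have IH := ih g hgtop a ha hconj
        rw [if_neg hg0, one_mul] at IH
        -- per-index bound
        have hMsub : ∀ (i : Fin r) (x y : F),
            (a i * (x - y) ^ q - c * (x - y)) = (a i * x ^ q - c * x) - (a i * y ^ q - c * y) := by
          intro i x y
          rw [sub_pow_q hqpm]
          ring
        have hbound : ∀ i : Fin r,
            (Finset.univ.filter fun β : F => Lnat q (d + 2) f (a i) β = 0).card
              ≤ (Finset.univ.filter fun γ : F => Lnat q (d + 1) g (a i) γ = 0).card *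
                (if i = i0 then q else 1) := by
          intro i
          have hfilter : (Finset.univ.filter fun β : F => Lnat q (d + 2) f (a i) β = 0)
              = Finset.univ.filter fun β : F =>
                  Lnat q (d + 1) g (a i) (a i * β ^ q - c * β) = 0 := by
            apply Finset.filter_congr
            intro β _
            rw [hident' (a i) β]
          rw [hfilter]
          refine card_preimage_le (hMsub i) (fun γ : F => Lnat q (d + 1) g (a i) γ = 0) _ ?_
          by_cases hii : i = i0
          · rw [if_pos hii]
            exact card_ker_M_le q hq2 (ha i)
          · rw [if_neg hii]
            have hkers : (Finset.univ.filter fun β : F => a i * β ^ q - c * β = 0) ⊆ {0} := by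
              intro β hβ
              rw [Finset.mem_filter] at hβ
              rw [Finset.mem_singleton]
              by_contra hβne
              have heq : β ^ (q - 1) * a i = c := by
                have h2 : a i * β ^ q = c * β := sub_eq_zero.mp hβ.2
                have hβq : β ^ q = β ^ (q - 1) * β := by
                  rw [← pow_succ]
                  congr 1
                  omega
                apply mul_right_cancel₀ hβne
                rw [← h2, hβq]
                ring
              apply hconj i0 i (Ne.symm hii) (β0 * β⁻¹)
                (mul_ne_zero hβ0ne (inv_ne_zero hβne))
              apply mul_right_cancel₀ (pow_ne_zero (q - 1) hβne)
              rw [mul_pow, inv_pow]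
              field_simp
              linear_combination heq
            calc (Finset.univ.filter fun β : F => a i * β ^ q - c * β = 0).card
                ≤ ({0} : Finset F).card := Finset.card_le_card hkers
              _ = 1 := Finset.card_singleton 0
        calc (∏ i, (Finset.univ.filter fun β : F => Lnat q (d + 2) f (a i) β = 0).card)
            ≤ ∏ i, ((Finset.univ.filter fun γ : F => Lnat q (d + 1) g (a i) γ = 0).card *
                (if i = i0 then q else 1)) := Finset.prod_le_prod (fun i _ => Nat.zero_le _) (fun i _ => hbound i)
          _ = (∏ i, (Finset.univ.filter fun γ : F => Lnat q (d + 1) g (a i) γ = 0).card) *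
                ∏ i, (if i = i0 then q else 1) := Finset.prod_mul_distrib
          _ = (∏ i, (Finset.univ.filter fun γ : F => Lnat q (d + 1) g (a i) γ = 0).card) * q := by
              rw [Finset.prod_ite_eq' Finset.univ i0 (fun _ => q), if_pos (Finset.mem_univ i0)]
          _ ≤ q ^ d * q := Nat.mul_le_mul_right q IH
          _ = q ^ (d + 1) := (pow_succ q d).symm
      · push_neg at hbig
        calc (∏ i, (Finset.univ.filter fun β : F => Lnat q (d + 2) f (a i) β = 0).card)
            ≤ ∏ _i : Fin r, 1 := by
              apply Finset.prod_le_prod (fun i _ => Nat.zero_le _)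
              intro i _
              have := hbig i
              omega
          _ = 1 := Finset.prod_const_one
          _ ≤ q ^ (d + 1) := Nat.one_le_pow _ _ hq0

/-- For a nonzero skew polynomial `f` of degree `d` and pairwise non-conjugate points
`a_1, …, a_r ∈ F*`, the sum of the `F_q`-dimensions of the kernels of the maps `D_{f,a_i}`
(the dimension `dims i` being characterized by `|ker D_{f,a_i}| = q^{dims i}`), plus `1`
if `f_0 = 0`, is at most `d`. -/
theorem sum_ker_dim_le_deg (q t d r : ℕ) (hq : IsPrimePow q) (ht : 1 ≤ t)
    (F : Type*) [Field F] [Fintype F] [DecidableEq F] (hF : Fintype.card F = q ^ t)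
    (f : Fin (d + 1) → F) (hfd : f (Fin.last d) ≠ 0)
    (a : Fin r → F) (ha : ∀ i, a i ≠ 0)
    (hconj : ∀ i j : Fin r, i ≠ j → ∀ β : F, β ≠ 0 → a j ≠ β ^ (q - 1) * a i)
    (dims : Fin r → ℕ)
    (hdims : ∀ i, Nat.card {β : F // Dmap q f (a i) β = 0} = q ^ dims i) :
    (if f 0 = 0 then 1 else 0) + ∑ i, dims i ≤ d := by
  classical
  obtain ⟨p, m, hpp, hm, hpmq⟩ := hq
  have hp : Nat.Prime p := Nat.prime_iff.mpr hpp
  haveI : Fact p.Prime := ⟨hp⟩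
  have hqpm : q = p ^ m := hpmq.symm
  have hq2 : 2 ≤ q := by
    have : 1 < p ^ m := Nat.one_lt_pow (by omega) hp.one_lt
    omega
  haveI hchar : CharP F p := by
    haveI := ringChar.charP F
    obtain ⟨n, hcp, hcard⟩ := FiniteField.card F (ringChar F)
    have h1 : p ^ (m * t) = ringChar F ^ (n : ℕ) := by
      rw [pow_mul, ← hqpm, ← hF, hcard]
    have hdvd : p ∣ ringChar F := by
      have hd : p ∣ ringChar F ^ (n : ℕ) := h1 ▸ dvd_pow_self p (by positivity)
      exact hp.prime.dvd_of_dvd_pow hd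
    have hpe : p = ringChar F := (Nat.prime_dvd_prime_iff_eq hp hcp).mp hdvd
    rw [hpe]
    exact ringChar.charP F
  set fN : ℕ → F := fun j => if h : j < d + 1 then f ⟨j, h⟩ else 0 with hfN
  have hfNd : fN d ≠ 0 := by
    have he : fN d = f (Fin.last d) := by
      rw [hfN]
      simp only [Nat.lt_succ_self, dif_pos]
      rfl
    rw [he]
    exact hfd
  have hkey := key_lemma hm hqpm d fN hfNd a ha hconj
  have hcards : ∀ i,
      (Finset.univ.filter fun β : F => Lnat q (d + 1) fN (a i) β = 0).card = q ^ dims i := by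
    intro i
    have h1 : Nat.card {β : F // Dmap q f (a i) β = 0}
        = (Finset.univ.filter fun β : F => Dmap q f (a i) β = 0).card := by
      rw [Nat.card_eq_fintype_card, Fintype.card_subtype]
    rw [← hdims i, h1]
    congr 1
    apply Finset.filter_congr
    intro β _
    rw [Dmap_eq_Lnat (by omega : 0 < q) f (a i) β, ← hfN]
  rw [Finset.prod_congr rfl (fun i _ => hcards i), Finset.prod_pow_eq_pow_sum] at hkey
  have hfN0 : fN 0 = f 0 := by rw [hfN]; simp only [Nat.succ_pos, dif_pos]; rfl
  by_cases h0 : f 0 = 0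
  · rw [if_pos h0]
    rw [hfN0, if_pos h0] at hkey
    have h2 : q ^ (1 + ∑ i, dims i) ≤ q ^ d := by
      rw [pow_add, pow_one]
      exact hkey
    exact (Nat.pow_le_pow_iff_right (by omega : 1 < q)).mp h2
  · rw [if_neg h0, zero_add]
    rw [hfN0, if_neg h0, one_mul] at hkey
    exact (Nat.pow_le_pow_iff_right (by omega : 1 < q)).mp hkey
end

section
/- Let q be a prime power, t ≥ 1, γ a primitive element of F_{q^t}, and f = (f_0, ..., f_d) ∈ F_{q^t}^{d+1} nonzero with f_d ≠ 0. Then Σ_{i=0}^{q-2} dim_{F_q} ker D_{f,γ^i} ≤ d, where ker D_{f,γ^i} = { β ∈ F_{q^t} : D_{f,γ^i}(β) = 0 }. -/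
namespace SkewAux

variable {F : Type*} [Field F]

/-- The linearized form `L_{f,a}(β) = Σ_{i≤e} f_i N_i(a) β^{q^i}`. -/
def Lsum (q : ℕ) (g : ℕ → F) (e : ℕ) (a β : F) : F :=
  ∑ i ∈ Finset.range (e + 1), g i * skewN q i a * β ^ q ^ i

lemma skewN_mul (q : ℕ) (i : ℕ) (x y : F) :
    skewN q i (x * y) = skewN q i x * skewN q i y := by
  induction i with
  | zero => simp [skewN]
  | succ n ih => simp only [skewN, ih, mul_pow]; ring

lemma skewN_succ' (q : ℕ) (i : ℕ) (a : F) :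
    skewN q (i + 1) a = skewN q i a * a ^ q ^ i := by
  induction i with
  | zero => simp [skewN]
  | succ n ih =>
    calc skewN q (n + 2) a = skewN q (n + 1) a ^ q * a := rfl
      _ = (skewN q n a * a ^ q ^ n) ^ q * a := by rw [ih]
      _ = (skewN q n a ^ q * a) * a ^ (q ^ n * q) := by rw [mul_pow, ← pow_mul]; ring
      _ = skewN q (n + 1) a * a ^ q ^ (n + 1) := by rw [← pow_succ]; rfl

lemma skewN_qpow (q : ℕ) (hq : 1 ≤ q) (i : ℕ) (β : F) :
    skewN q i (β ^ (q - 1)) * β = β ^ q ^ i := by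
  induction i with
  | zero => simp [skewN]
  | succ n ih =>
    have hβ : β ^ (q - 1) * β = β ^ q := by
      rw [← pow_succ]; congr 1; omega
    calc skewN q (n + 1) (β ^ (q - 1)) * β
        = skewN q n (β ^ (q - 1)) ^ q * (β ^ (q - 1) * β) := by
          simp only [skewN]; ring
      _ = (skewN q n (β ^ (q - 1)) * β) ^ q := by rw [hβ, mul_pow]
      _ = (β ^ q ^ n) ^ q := by rw [ih]
      _ = β ^ q ^ (n + 1) := by rw [← pow_mul, pow_succ]

lemma Lsum_zero (q : ℕ) (hq : 1 ≤ q) (g : ℕ → F) (e : ℕ) (a : F) :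
    Lsum q g e a 0 = 0 := by
  refine Finset.sum_eq_zero fun i _ => ?_
  rw [zero_pow (by positivity), mul_zero]

/-- Auxiliary downward recursion for the quotient upon right division by `x - b`. -/
def qAux (q : ℕ) (f : ℕ → F) (b : F) (e : ℕ) : ℕ → F
  | 0 => f (e + 1)
  | k + 1 => f (e - k) + qAux q f b e k * b ^ q ^ (e - k)

/-- Quotient coefficients of `f` upon right division by `x - b` in the skew sense. -/
def quo (q : ℕ) (f : ℕ → F) (b : F) (e n : ℕ) : F := qAux q f b e (e - n)

lemma quo_top (q : ℕ) (f : ℕ → F) (b : F) (e : ℕ) : quo q f b e e = f (e + 1) := by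
  simp [quo, qAux]

lemma quo_rec (q : ℕ) (f : ℕ → F) (b : F) {e n : ℕ} (h : n < e) :
    quo q f b e n = f (n + 1) + quo q f b e (n + 1) * b ^ q ^ (n + 1) := by
  have h1 : e - n = (e - (n + 1)) + 1 := by omega
  have h2 : e - (e - (n + 1)) = n + 1 := by omega
  rw [quo, h1, qAux, h2]
  rfl

/-- The key division identity: `L_{f,a}(β) = L_{h,a}(aβ^q - bβ) + r·β`. -/
lemma div_identity (q p s : ℕ) [Fact p.Prime] [CharP F p] (hqs : q = p ^ s)
    (f : ℕ → F) (b : F) (e : ℕ) (a β : F) :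
    Lsum q f (e + 1) a β
      = Lsum q (quo q f b e) e a (a * β ^ q - b * β)
        + (f 0 + quo q f b e 0 * b) * β := by
  set h : ℕ → F := quo q f b e with hh_def
  have hfrob : ∀ (x y : F) (n : ℕ), (x - y) ^ q ^ n = x ^ q ^ n - y ^ q ^ n := by
    intro x y n
    have hqe : q ^ n = p ^ (s * n) := by rw [hqs, ← pow_mul]
    rw [hqe]
    exact sub_pow_char_pow x y (s * n)
  set X : ℕ → F := fun n => skewN q n a * β ^ q ^ n with hX
  have expand : ∀ i, h i * skewN q i a * (a * β ^ q - b * β) ^ q ^ i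
      = h i * X (i + 1) - h i * b ^ q ^ i * X i := by
    intro i
    rw [hfrob, mul_pow, mul_pow, hX]
    simp only []
    rw [skewN_succ' q i a]
    rw [← pow_mul β]
    have h2 : q * q ^ i = q ^ (i + 1) := by rw [pow_succ]; ring
    rw [h2]
    ring
  set hh : ℕ → F := fun n => if n = 0 then 0 else h (n - 1) with hhh
  have hh0 : hh 0 = 0 := by simp [hhh]
  have hhsucc : ∀ k, hh (k + 1) = h k := by intro k; simp [hhh]
  have eC : Lsum q h e a (a * β ^ q - b * β)
      = (∑ i ∈ Finset.range (e + 1), h i * X (i + 1))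
        - ∑ i ∈ Finset.range (e + 1), h i * b ^ q ^ i * X i := by
    rw [Lsum, ← Finset.sum_sub_distrib]
    exact Finset.sum_congr rfl fun i _ => expand i
  have eS : ∑ n ∈ Finset.range (e + 1 + 1), hh n * X n
      = ∑ i ∈ Finset.range (e + 1), h i * X (i + 1) := by
    rw [Finset.sum_range_succ' (fun n => hh n * X n) (e + 1), hh0, zero_mul, add_zero]
    exact Finset.sum_congr rfl fun i _ => by rw [hhsucc]
  have main2 : ∀ n ∈ Finset.range (e + 1),
      (f n - hh n) * X n
        = -(h n * b ^ q ^ n * X n) + (if n = 0 then (f 0 + h 0 * b) * β else 0) := by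
    intro n hn
    rw [Finset.mem_range] at hn
    rcases n with _ | k
    · rw [hh0, if_pos rfl, hX]
      simp only [skewN, pow_zero, pow_one]
      ring
    · have hk : k < e := by omega
      rw [hhsucc, if_neg (by omega)]
      have hrec : h (k + 1 - 1) = f (k + 1) + h (k + 1) * b ^ q ^ (k + 1) := by
        simpa using quo_rec q f b hk
      simp only [Nat.add_sub_cancel] at hrec
      rw [hrec]
      ring
  have eM : ∑ n ∈ Finset.range (e + 1 + 1), f n * X n
        - ∑ n ∈ Finset.range (e + 1 + 1), hh n * X n
      = -(∑ n ∈ Finset.range (e + 1), h n * b ^ q ^ n * X n) + (f 0 + h 0 * b) * β := by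
    rw [← Finset.sum_sub_distrib]
    have e1 : ∑ n ∈ Finset.range (e + 1 + 1), (f n * X n - hh n * X n)
        = ∑ n ∈ Finset.range (e + 1), (f n - hh n) * X n := by
      rw [Finset.sum_range_succ]
      have top : f (e + 1) * X (e + 1) - hh (e + 1) * X (e + 1) = 0 := by
        rw [hhsucc, hh_def, quo_top, sub_self]
      rw [top, add_zero]
      exact Finset.sum_congr rfl fun n _ => by ring
    rw [e1, Finset.sum_congr rfl main2, Finset.sum_add_distrib]
    congr 1
    · exact Finset.sum_neg_distrib (f := fun n => h n * b ^ q ^ n * X n)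
    · rw [Finset.sum_ite_eq' (Finset.range (e + 1)) 0 fun _ => (f 0 + h 0 * b) * β]
      simp
  have eL : Lsum q f (e + 1) a β = ∑ n ∈ Finset.range (e + 1 + 1), f n * X n := by
    rw [Lsum]
    exact Finset.sum_congr rfl fun n _ => mul_assoc _ _ _
  rw [eL, eC]
  linear_combination eM + eS * (1 : F)

lemma natcard_eq_filter [Fintype F] [DecidableEq F] (P : F → Prop) [DecidablePred P] :
    Nat.card {β : F // P β} = (Finset.univ.filter P).card := by
  rw [Nat.card_eq_fintype_card, Fintype.card_subtype]

lemma card_comp [Fintype F] [DecidableEq F] (φ ψ T : F → F)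
    (hcomp : ∀ β, φ β = ψ (T β)) (hT : ∀ x y : F, T x - T y = T (x - y)) :
    (Finset.univ.filter fun β : F => φ β = 0).card
      ≤ (Finset.univ.filter fun β : F => T β = 0).card
        * (Finset.univ.filter fun δ : F => ψ δ = 0).card := by
  classical
  apply Finset.card_le_mul_card_image_of_maps_to (f := T)
  · intro x hx
    simp only [Finset.mem_filter, Finset.mem_univ, true_and] at hx ⊢
    rw [← hcomp]; exact hx
  · intro c _
    by_cases hne : ((Finset.univ.filter fun β : F => φ β = 0).filter
        (fun x => T x = c)).Nonempty
    · obtain ⟨x0, hx0⟩ := hne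
      apply Finset.card_le_card_of_injOn (fun x => x - x0)
      · intro x hx
        simp only [Finset.mem_coe, Finset.mem_filter, Finset.mem_univ, true_and] at hx hx0 ⊢
        rw [← hT, hx.2, hx0.2, sub_self]
      · intro x _ y _ hxy
        exact sub_left_inj.mp hxy
    · rw [Finset.not_nonempty_iff_eq_empty] at hne
      rw [hne]
      simp

lemma card_pow_sub_mul_le [Fintype F] [DecidableEq F] (q : ℕ) (hq : 2 ≤ q) (c : F) :
    (Finset.univ.filter fun β : F => β ^ q = c * β).card ≤ q := by
  classical
  set P : Polynomial F := Polynomial.X ^ q - Polynomial.C c * Polynomial.X with hP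
  have hP0 : P ≠ 0 := by
    intro h
    have hco : P.coeff q = 0 := by rw [h]; simp
    rw [hP, Polynomial.coeff_sub, Polynomial.coeff_X_pow, Polynomial.coeff_C_mul,
      Polynomial.coeff_X, if_pos rfl, if_neg (by omega : ¬ 1 = q)] at hco
    simp at hco
  have hdeg : P.natDegree ≤ q := by
    refine le_trans (Polynomial.natDegree_sub_le _ _) ?_
    rw [max_le_iff]
    constructor
    · rw [Polynomial.natDegree_X_pow]
    · refine le_trans (Polynomial.natDegree_C_mul_le _ _) ?_
      rw [Polynomial.natDegree_X]; omega
  refine le_trans ?_ (le_trans (Multiset.toFinset_card_le P.roots)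
    (le_trans (Polynomial.card_roots' P) hdeg))
  apply Finset.card_le_card
  intro x hx
  simp only [Finset.mem_filter, Finset.mem_univ, true_and] at hx
  rw [Multiset.mem_toFinset, Polynomial.mem_roots hP0]
  simp [Polynomial.IsRoot, hP, hx]

lemma sep (q t : ℕ) [Fintype F] (hq : 2 ≤ q) (ht : 1 ≤ t)
    (hF : Fintype.card F = q ^ t) (γ : F) (hγ : orderOf γ = q ^ t - 1) :
    ∀ i < q - 1, ∀ j < q - 1, ∀ β β0 : F, β ≠ 0 → β0 ≠ 0 →
      β ^ (q - 1) * γ ^ i = β0 ^ (q - 1) * γ ^ j → i = j := by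
  have hqt : 2 ≤ q ^ t := le_trans hq (Nat.le_self_pow (by omega) q)
  have hγ0 : γ ≠ 0 := by
    intro h
    have h1 : γ ^ (q ^ t - 1) = 1 := by rw [← hγ]; exact pow_orderOf_eq_one γ
    rw [h, zero_pow (by omega)] at h1
    exact zero_ne_one h1
  have hdvd : q - 1 ∣ q ^ t - 1 := by
    have := Nat.sub_dvd_pow_sub_pow q 1 t
    simpa using this
  set m := (q ^ t - 1) / (q - 1) with hm_def
  have hm : (q - 1) * m = q ^ t - 1 := Nat.mul_div_cancel' hdvd
  have hm0 : 0 < m := by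
    rcases Nat.eq_zero_or_pos m with h | h
    · rw [h, mul_zero] at hm; omega
    · exact h
  have hpow1 : ∀ x : F, x ≠ 0 → x ^ (q ^ t - 1) = 1 := by
    intro x hx
    have := FiniteField.pow_card_sub_one_eq_one x hx
    rwa [hF] at this
  have main : ∀ i j, i ≤ j → j < q - 1 → γ ^ (i * m) = γ ^ (j * m) → i = j := by
    intro i j hij hj h2
    have hsplit : j * m = i * m + (j - i) * m := by
      have h3 : i * m + (j - i) * m = (i + (j - i)) * m := by rw [Nat.add_mul]
      have h4 : i + (j - i) = j := by omega
      rw [h3, h4]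
    rw [hsplit, pow_add] at h2
    have hγi : γ ^ (i * m) ≠ 0 := pow_ne_zero _ hγ0
    have h3 : γ ^ ((j - i) * m) = 1 :=
      mul_left_cancel₀ hγi (by rw [mul_one, ← h2])
    have h4 : orderOf γ ∣ (j - i) * m := orderOf_dvd_of_pow_eq_one h3
    rw [hγ, ← hm] at h4
    have h5 : (q - 1) ∣ (j - i) := (Nat.mul_dvd_mul_iff_right hm0).mp h4
    rcases Nat.eq_zero_or_pos (j - i) with h6 | h6
    · omega
    · have := Nat.le_of_dvd h6 h5
      omega
  intro i hi j hj β β0 hβ hβ0 heq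
  have h1 : (β ^ (q - 1) * γ ^ i) ^ m = (β0 ^ (q - 1) * γ ^ j) ^ m := by rw [heq]
  rw [mul_pow, mul_pow, ← pow_mul, ← pow_mul, ← pow_mul, ← pow_mul, hm,
    hpow1 β hβ, hpow1 β0 hβ0, one_mul, one_mul] at h1
  rcases le_total i j with h | h
  · exact main i j h hj h1
  · exact (main j i h hi h1.symm).symm

lemma key (q t p s : ℕ) [Fintype F] [DecidableEq F] (hp : Fact p.Prime) (hs : 1 ≤ s) (hqs : q = p ^ s)
    (ht : 1 ≤ t) (hchar : CharP F p)
    (hF : Fintype.card F = q ^ t) (γ : F) (hγ : orderOf γ = q ^ t - 1) :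
    ∀ (e : ℕ) (f : ℕ → F), f e ≠ 0 →
      (∏ i ∈ Finset.range (q - 1),
        (Finset.univ.filter fun β : F => Lsum q f e (γ ^ i) β = 0).card) ≤ q ^ e := by
  classical
  haveI := hp
  haveI := hchar
  have hq2 : 2 ≤ q := by
    rw [hqs]
    calc 2 ≤ p := hp.out.two_le
      _ ≤ p ^ s := Nat.le_self_pow (by omega) p
  have hqt : 2 ≤ q ^ t := le_trans hq2 (Nat.le_self_pow (by omega) q)
  have hγ0 : γ ≠ 0 := by
    intro h
    have h1 : γ ^ (q ^ t - 1) = 1 := by rw [← hγ]; exact pow_orderOf_eq_one γ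
    rw [h, zero_pow (by omega)] at h1
    exact zero_ne_one h1
  intro e
  induction e with
  | zero =>
    intro f hf
    have hone : ∀ i ∈ Finset.range (q - 1),
        (Finset.univ.filter fun β : F => Lsum q f 0 (γ ^ i) β = 0).card = 1 := by
      intro i _
      have hset : (Finset.univ.filter fun β : F => Lsum q f 0 (γ ^ i) β = 0) = {0} := by
        ext β
        simp only [Finset.mem_filter, Finset.mem_univ, true_and, Finset.mem_singleton,
          Lsum, zero_add, Finset.sum_range_one, skewN, pow_zero, pow_one, mul_one, one_mul]
        constructor
        · intro h
          rcases mul_eq_zero.mp h with h | h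
          · exact absurd h hf
          · exact h
        · intro h; rw [h, mul_zero]
      rw [hset, Finset.card_singleton]
    rw [Finset.prod_congr rfl hone]
    simp
  | succ e ih =>
    intro f hf
    by_cases hroot : ∃ i ∈ Finset.range (q - 1), ∃ β : F, β ≠ 0 ∧ Lsum q f (e + 1) (γ ^ i) β = 0
    · obtain ⟨i0, hi0mem, β0, hβ0, hL0⟩ := hroot
      rw [Finset.mem_range] at hi0mem
      set b : F := β0 ^ (q - 1) * γ ^ i0 with hb
      have hq1 : β0 ^ (q - 1) * β0 = β0 ^ q := by
        rw [← pow_succ]; congr 1; omega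
      have hrem : f 0 + quo q f b e 0 * b = 0 := by
        have hid := div_identity q p s hqs f b e (γ ^ i0) β0
        have hT0 : γ ^ i0 * β0 ^ q - b * β0 = 0 := by
          rw [hb]
          calc γ ^ i0 * β0 ^ q - β0 ^ (q - 1) * γ ^ i0 * β0
              = γ ^ i0 * β0 ^ q - γ ^ i0 * (β0 ^ (q - 1) * β0) := by ring
            _ = 0 := by rw [hq1]; ring
        rw [hL0, hT0, Lsum_zero q (by omega)] at hid
        rw [zero_add] at hid
        rcases mul_eq_zero.mp hid.symm with h | h
        · exact h
        · exact absurd h hβ0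
      have hid : ∀ a' β : F, Lsum q f (e + 1) a' β
          = Lsum q (quo q f b e) e a' (a' * β ^ q - b * β) := by
        intro a' β
        rw [div_identity q p s hqs f b e a' β, hrem, zero_mul, add_zero]
      have percl : ∀ i ∈ Finset.range (q - 1),
          (Finset.univ.filter fun β : F => Lsum q f (e + 1) (γ ^ i) β = 0).card
            ≤ (Finset.univ.filter fun β : F => γ ^ i * β ^ q - b * β = 0).card
              * (Finset.univ.filter fun δ : F => Lsum q (quo q f b e) e (γ ^ i) δ = 0).card := by
        intro i _
        apply card_comp
        · intro β; exact hid (γ ^ i) β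
        · intro x y
          have hfr : (x - y) ^ q = x ^ q - y ^ q := by
            rw [hqs]; exact sub_pow_char_pow x y s
          rw [hfr]; ring
      have hKt : (∏ i ∈ Finset.range (q - 1),
          (Finset.univ.filter fun β : F => γ ^ i * β ^ q - b * β = 0).card) ≤ q := by
        rw [Finset.prod_eq_single i0 ?side1 ?side2]
        · have hsub : (Finset.univ.filter fun β : F => γ ^ i0 * β ^ q - b * β = 0)
              ⊆ (Finset.univ.filter fun β : F => β ^ q = β0 ^ (q - 1) * β) := by
            intro x hx
            simp only [Finset.mem_filter, Finset.mem_univ, true_and] at hx ⊢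
            have hg : γ ^ i0 ≠ 0 := pow_ne_zero _ hγ0
            apply mul_left_cancel₀ hg
            rw [hb] at hx
            calc γ ^ i0 * x ^ q = β0 ^ (q - 1) * γ ^ i0 * x := by
                  have := sub_eq_zero.mp hx; linear_combination this
              _ = γ ^ i0 * (β0 ^ (q - 1) * x) := by ring
          exact le_trans (Finset.card_le_card hsub) (card_pow_sub_mul_le q hq2 _)
        case side1 =>
          intro i himem hine
          rw [Finset.mem_range] at himem
          have hset : (Finset.univ.filter fun β : F => γ ^ i * β ^ q - b * β = 0) = {0} := by
            ext β
            simp only [Finset.mem_filter, Finset.mem_univ, true_and, Finset.mem_singleton]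
            constructor
            · intro h
              by_contra hβ
              have hβq : β ^ (q - 1) * β = β ^ q := by
                rw [← pow_succ]; congr 1; omega
              have hcl : β ^ (q - 1) * γ ^ i = β0 ^ (q - 1) * γ ^ i0 := by
                apply mul_right_cancel₀ hβ
                rw [← hb]
                calc β ^ (q - 1) * γ ^ i * β = γ ^ i * (β ^ (q - 1) * β) := by ring
                  _ = γ ^ i * β ^ q := by rw [hβq]
                  _ = b * β := by linear_combination h
              exact hine (sep q t hq2 ht hF γ hγ i himem i0 hi0mem β β0 hβ hβ0 hcl)
            · intro h
              rw [h, zero_pow (by omega : q ≠ 0), mul_zero, mul_zero, sub_zero]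
          rw [hset, Finset.card_singleton]
        case side2 =>
          intro h
          exact absurd (Finset.mem_range.mpr hi0mem) h
      have hprod : (∏ i ∈ Finset.range (q - 1),
          (Finset.univ.filter fun β : F => Lsum q f (e + 1) (γ ^ i) β = 0).card)
          ≤ ∏ i ∈ Finset.range (q - 1),
            ((Finset.univ.filter fun β : F => γ ^ i * β ^ q - b * β = 0).card
              * (Finset.univ.filter fun δ : F => Lsum q (quo q f b e) e (γ ^ i) δ = 0).card) :=
        Finset.prod_le_prod (fun i _ => Nat.zero_le _) percl
      rw [Finset.prod_mul_distrib] at hprod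
      have htop : quo q f b e e ≠ 0 := by rw [quo_top]; exact hf
      have hih := ih (quo q f b e) htop
      calc (∏ i ∈ Finset.range (q - 1),
            (Finset.univ.filter fun β : F => Lsum q f (e + 1) (γ ^ i) β = 0).card)
          ≤ _ := hprod
        _ ≤ q * q ^ e := Nat.mul_le_mul hKt hih
        _ = q ^ (e + 1) := by rw [pow_succ]; ring
    · push_neg at hroot
      have hone : ∀ i ∈ Finset.range (q - 1),
          (Finset.univ.filter fun β : F => Lsum q f (e + 1) (γ ^ i) β = 0).card = 1 := by
        intro i hi
        have hset : (Finset.univ.filter fun β : F => Lsum q f (e + 1) (γ ^ i) β = 0) = {0} := by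
          ext β
          simp only [Finset.mem_filter, Finset.mem_univ, true_and, Finset.mem_singleton]
          constructor
          · intro h
            by_contra hβ
            exact (hroot i hi β hβ) h
          · intro h
            rw [h]
            exact Lsum_zero q (by omega) f (e + 1) (γ ^ i)
        rw [hset, Finset.card_singleton]
      rw [Finset.prod_congr rfl hone]
      simp only [Finset.prod_const_one]
      exact Nat.one_le_pow _ _ (by omega)

lemma Dmap_eq (q : ℕ) (hq : 1 ≤ q) {d : ℕ} (f : Fin (d + 1) → F) (a β : F) :
    Dmap q f a β = Lsum q (fun n => if h : n < d + 1 then f ⟨n, h⟩ else 0) d a β := by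
  rw [Dmap, Lsum]
  rw [← Fin.sum_univ_eq_sum_range
    (fun n => (if h : n < d + 1 then f ⟨n, h⟩ else 0) * skewN q n a * β ^ q ^ n) (d + 1)]
  refine Finset.sum_congr rfl fun i _ => ?_
  rw [dif_pos i.isLt]
  rw [skewN_mul, ← skewN_qpow q hq (i : ℕ) β]
  ring

end SkewAux

open SkewAux in
/-- For a nonzero skew polynomial `f` of degree `d` and a primitive element `γ` of
`F_{q^t}`, the sum over `i = 0, …, q-2` of the `F_q`-dimensions of `ker D_{f,γ^i}`
(the dimension `dims i` being characterized by `|ker D_{f,γ^i}| = q^{dims i}`) is at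
most `d`. -/
theorem sum_ker_dim_over_classes_le_deg (q t d : ℕ) (hq : IsPrimePow q) (ht : 1 ≤ t)
    (F : Type*) [Field F] [Fintype F] (hF : Fintype.card F = q ^ t)
    (γ : F) (hγ : orderOf γ = q ^ t - 1)
    (f : Fin (d + 1) → F) (hfd : f (Fin.last d) ≠ 0)
    (dims : Fin (q - 1) → ℕ)
    (hdims : ∀ i : Fin (q - 1),
      Nat.card {β : F // Dmap q f (γ ^ (i : ℕ)) β = 0} = q ^ dims i) :
    ∑ i, dims i ≤ d := by
  classical
  obtain ⟨p, s, hpp, hs, hqs⟩ := hq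
  have hp' : Nat.Prime p := Nat.prime_iff.mpr hpp
  haveI : Fact (Nat.Prime p) := ⟨hp'⟩
  have hqs' : q = p ^ s := hqs.symm
  have hq2 : 2 ≤ q := by
    rw [hqs']
    calc 2 ≤ p := hp'.two_le
      _ ≤ p ^ s := Nat.le_self_pow (by omega) p
  have hchar : CharP F p := by
    haveI := ringChar.charP F
    obtain ⟨n, hn', hcard⟩ := FiniteField.card F (ringChar F)
    have hpow : p ^ (s * t) = ringChar F ^ (n : ℕ) := by
      rw [← hcard, hF, hqs', ← pow_mul]
    have hdvd : p ∣ ringChar F ^ (n : ℕ) := by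
      rw [← hpow]
      exact dvd_pow_self p (by positivity)
    have : p ∣ ringChar F := hp'.dvd_of_dvd_pow hdvd
    have heq : p = ringChar F := ((Nat.prime_dvd_prime_iff_eq hp' hn').mp this)
    rw [heq]
    exact ringChar.charP F
  set fe : ℕ → F := fun n => if h : n < d + 1 then f ⟨n, h⟩ else 0 with hfe
  have hfetop : fe d ≠ 0 := by
    have : fe d = f (Fin.last d) := by
      rw [hfe]
      simp only [dif_pos (Nat.lt_succ_self d)]
      rfl
    rw [this]
    exact hfd
  letI : DecidableEq F := Classical.decEq F
  have hkey := key q t p s ⟨hp'⟩ hs hqs' ht hchar hF γ hγ d fe hfetop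
  have hconv : ∀ i : ℕ,
      (Finset.univ.filter fun β : F => Lsum q fe d (γ ^ i) β = 0).card
        = Nat.card {β : F // Dmap q f (γ ^ i) β = 0} := by
    intro i
    rw [natcard_eq_filter]
    congr 1
    apply Finset.filter_congr
    intro β _
    rw [Dmap_eq q (by omega) f (γ ^ i) β]
  have hmain : ∏ i : Fin (q - 1), q ^ dims i ≤ q ^ d := by
    calc ∏ i : Fin (q - 1), q ^ dims i
        = ∏ i : Fin (q - 1), Nat.card {β : F // Dmap q f (γ ^ (i : ℕ)) β = 0} :=
          Finset.prod_congr rfl fun i _ => (hdims i).symm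
      _ = ∏ i ∈ Finset.range (q - 1), Nat.card {β : F // Dmap q f (γ ^ i) β = 0} :=
          Fin.prod_univ_eq_prod_range (fun i => Nat.card {β : F // Dmap q f (γ ^ i) β = 0}) (q - 1)
      _ = ∏ i ∈ Finset.range (q - 1),
            (Finset.univ.filter fun β : F => Lsum q fe d (γ ^ i) β = 0).card :=
          Finset.prod_congr rfl fun i _ => (hconv i).symm
      _ ≤ q ^ d := hkey
  rw [Finset.prod_pow_eq_pow_sum] at hmain
  exact (Nat.pow_le_pow_iff_right (by omega)).mp hmain
end
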